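/- arXiv:2105.10225 — 6 statements merged into one kernel-verified Lean document; each statement's English description precedes it below -/
import Mathlib

section
/- If f and f' are two feasible integer flows of the same network, then there exist finitely many directed cycles C_1, …, C_k in the residual graph D_f and positive integers λ_1, …, λ_k such that f' = f + Σ_{j=1}^k λ_j χ(C_j) and c(f') = c(f) + Σ_{j=1}^k λ_j c(f,C_j). -/
open scoped Classical
noncomputable section

/-- A network: finite directed graph with arc set `A`, lower/upper capacities `l`, `u`,
node balances `b` and arc costs `c`. -/
structure Network (V : Type) [Fintype V] [DecidableEq V] where
  A : Finset (V × V)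
  l : V × V → ℤ
  u : V × V → ℤ
  b : V → ℤ
  c : V × V → ℝ

variable {V : Type} [Fintype V] [DecidableEq V]

namespace Network

/-- No anti-parallel arcs, and `0 ≤ l ≤ u` on every arc. -/
def Wellformed (N : Network V) : Prop :=
  (∀ a ∈ N.A, (a.2, a.1) ∉ N.A) ∧ ∀ a ∈ N.A, 0 ≤ N.l a ∧ N.l a ≤ N.u a

/-- A feasible integer flow: capacity constraints, vanishing outside `A`, flow balance. -/
def Feasible (N : Network V) (f : V × V → ℤ) : Prop :=
  (∀ a ∈ N.A, N.l a ≤ f a ∧ f a ≤ N.u a) ∧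
  (∀ a, a ∉ N.A → f a = 0) ∧
  ∀ i : V, ((∑ a ∈ N.A.filter fun a => a.1 = i, f a)
         - ∑ a ∈ N.A.filter fun a => a.2 = i, f a) = N.b i

/-- The cost of a flow. -/
def cost (N : Network V) (f : V × V → ℤ) : ℝ := ∑ a ∈ N.A, N.c a * (f a : ℝ)

/-- A flow is optimal if it is feasible of minimum cost. -/
def Optimal (N : Network V) (f : V × V → ℤ) : Prop :=
  N.Feasible f ∧ ∀ g, N.Feasible g → N.cost f ≤ N.cost g

/-- The arc set `A_f` of the residual graph `D_f`. -/
def resArcs (N : Network V) (f : V × V → ℤ) : Finset (V × V) :=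
  N.A.filter (fun a => f a < N.u a) ∪ (N.A.filter fun a => N.l a < f a).image Prod.swap

/-- Residual cost of a residual arc: `c_{ij}` on forward arcs, `-c_{ji}` on backward arcs. -/
def resCost (N : Network V) (a : V × V) : ℝ :=
  if a ∈ N.A then N.c a else -N.c (a.2, a.1)

/-- Residual capacity of a residual arc. -/
def resCap (N : Network V) (f : V × V → ℤ) (a : V × V) : ℤ :=
  if a ∈ N.A then N.u a - f a else f (a.2, a.1) - N.l (a.2, a.1)

/-- Reduced cost of an arc of `A` w.r.t. node potentials `y`. -/
def redCost (N : Network V) (y : V → ℝ) (a : V × V) : ℝ := N.c a + y a.1 - y a.2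

/-- Residual reduced cost of a residual arc w.r.t. node potentials `y`. -/
def resRedCost (N : Network V) (y : V → ℝ) (a : V × V) : ℝ := N.resCost a + y a.1 - y a.2

/-- `y` is an optimal node potential for `f`. -/
def OptPotential (N : Network V) (f : V × V → ℤ) (y : V → ℝ) : Prop :=
  ∀ a ∈ N.resArcs f, 0 ≤ N.resRedCost y a

end Network

/-- A (simple, directed) cycle: a nonempty duplicate-free list of at least two vertices,
traversed cyclically. -/
structure Cyc (V : Type) where
  verts : List V
  nodup : verts.Nodup
  two_le : 2 ≤ verts.length

/-- The arcs of a cycle: consecutive (cyclic) pairs of vertices. -/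
def Cyc.arcs (C : Cyc V) : Finset (V × V) :=
  (C.verts.zip (C.verts.rotate 1)).toFinset

/-- A cycle is proper if it contains no pair of anti-parallel arcs. -/
def Cyc.Proper (C : Cyc V) : Prop := ∀ a ∈ C.arcs, (a.2, a.1) ∉ C.arcs

/-- The incidence vector `χ(C)` of a cycle. -/
def Cyc.chi (C : Cyc V) : V × V → ℤ :=
  fun a => if a ∈ C.arcs then 1 else if (a.2, a.1) ∈ C.arcs then -1 else 0

namespace Network

/-- `C` is a directed cycle of the residual graph `D_f`. -/
def IsResCycle (N : Network V) (f : V × V → ℤ) (C : Cyc V) : Prop :=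
  ∀ a ∈ C.arcs, a ∈ N.resArcs f

/-- The cost `c(f,C)` of a cycle in the residual graph. -/
def cycCost (N : Network V) (C : Cyc V) : ℝ := ∑ a ∈ C.arcs, N.resCost a

end Network

namespace Network

/-- The incidence vector `χ(C) ∈ {−1,0,1}^A` of a residual cycle, as a vector indexed by
the arcs of the network (zero outside `A`). -/
def chi (N : Network V) (C : Cyc V) : V × V → ℤ :=
  fun a => if a ∈ N.A then C.chi a else 0

end Network

section FlowDecompAux

variable {V : Type} [Fintype V] [DecidableEq V]

private lemma Cyc.zipLen (C : Cyc V) :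
    (C.verts.zip (C.verts.rotate 1)).length = C.verts.length := by
  simp

private lemma Cyc.map_fst_zip' (C : Cyc V) :
    (C.verts.zip (C.verts.rotate 1)).map Prod.fst = C.verts :=
  List.map_fst_zip (by simp)

private lemma Cyc.map_snd_zip' (C : Cyc V) :
    (C.verts.zip (C.verts.rotate 1)).map Prod.snd = C.verts.rotate 1 :=
  List.map_snd_zip (by simp)

private lemma Cyc.zip_nodup (C : Cyc V) : (C.verts.zip (C.verts.rotate 1)).Nodup :=
  List.Nodup.of_map Prod.fst (by rw [C.map_fst_zip']; exact C.nodup)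

private lemma Cyc.sum_arcs {M : Type} [AddCommMonoid M] (C : Cyc V) (g : V × V → M) :
    ∑ a ∈ C.arcs, g a = ((C.verts.zip (C.verts.rotate 1)).map g).sum :=
  List.sum_toFinset g C.zip_nodup

private lemma Cyc.sum_fst {M : Type} [AddCommMonoid M] (C : Cyc V) (g : V → M) :
    ∑ a ∈ C.arcs, g a.1 = ∑ v ∈ C.verts.toFinset, g v := by
  rw [Cyc.sum_arcs C (fun a => g a.1),
    show (fun a : V × V => g a.1) = g ∘ Prod.fst from rfl, ← List.map_map, C.map_fst_zip',
    List.sum_toFinset g C.nodup]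

private lemma Cyc.sum_snd {M : Type} [AddCommMonoid M] (C : Cyc V) (g : V → M) :
    ∑ a ∈ C.arcs, g a.2 = ∑ v ∈ C.verts.toFinset, g v := by
  rw [Cyc.sum_arcs C (fun a => g a.2),
    show (fun a : V × V => g a.2) = g ∘ Prod.snd from rfl, ← List.map_map, C.map_snd_zip',
    ((C.verts.rotate_perm 1).map g).sum_eq, List.sum_toFinset g C.nodup]

private lemma Cyc.sum_ind_fst (C : Cyc V) (i : V) :
    ∑ a ∈ C.arcs, (if a.1 = i then (1:ℤ) else 0) = if i ∈ C.verts then 1 else 0 := by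
  rw [Cyc.sum_fst C (fun v => if v = i then (1:ℤ) else 0), Finset.sum_ite_eq']
  simp

private lemma Cyc.sum_ind_snd (C : Cyc V) (i : V) :
    ∑ a ∈ C.arcs, (if a.2 = i then (1:ℤ) else 0) = if i ∈ C.verts then 1 else 0 := by
  rw [Cyc.sum_snd C (fun v => if v = i then (1:ℤ) else 0), Finset.sum_ite_eq']
  simp

private lemma Cyc.card_arcs (C : Cyc V) : C.arcs.card = C.verts.length := by
  rw [show C.arcs = (C.verts.zip (C.verts.rotate 1)).toFinset from rfl,
    List.toFinset_card_of_nodup C.zip_nodup, C.zipLen]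

private lemma Cyc.cons_eq (C : Cyc V) (i : V) :
    ∑ a : V × V, (if a.1 = i then (if a ∈ C.arcs then (1:ℤ) else 0) else 0)
    = ∑ a : V × V, (if a.2 = i then (if a ∈ C.arcs then (1:ℤ) else 0) else 0) := by
  have c1 : ∀ a : V × V, (if a.1 = i then (if a ∈ C.arcs then (1:ℤ) else 0) else 0)
      = (if a ∈ C.arcs then (if a.1 = i then (1:ℤ) else 0) else 0) := by
    intro a; by_cases h1 : a.1 = i <;> by_cases h2 : a ∈ C.arcs <;> simp [h1, h2]
  have c2 : ∀ a : V × V, (if a.2 = i then (if a ∈ C.arcs then (1:ℤ) else 0) else 0)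
      = (if a ∈ C.arcs then (if a.2 = i then (1:ℤ) else 0) else 0) := by
    intro a; by_cases h1 : a.2 = i <;> by_cases h2 : a ∈ C.arcs <;> simp [h1, h2]
  rw [Finset.sum_congr rfl (fun a _ => c1 a), Finset.sum_congr rfl (fun a _ => c2 a),
    Finset.sum_ite_mem, Finset.sum_ite_mem, Finset.univ_inter,
    Cyc.sum_ind_fst, Cyc.sum_ind_snd]

end FlowDecompAux

section FlowDecompAux2
variable {V : Type} [Fintype V] [DecidableEq V]

private lemma exists_good_cycle (h : V × V → ℤ) (h0 : ∀ a, 0 ≤ h a)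
    (hloop : ∀ v, h (v, v) = 0)
    (hcons : ∀ i, ∑ a : V × V, (if a.1 = i then h a else 0)
                = ∑ a : V × V, (if a.2 = i then h a else 0))
    (a₀ : V × V) (ha₀ : 0 < h a₀) :
    ∃ C : Cyc V, ∀ a ∈ C.arcs, 0 < h a := by
  have step : ∀ v w, 0 < h (v, w) → ∃ w', 0 < h (w, w') := by
    intro v w hvw
    by_contra hc
    push_neg at hc
    have h2 : 0 < ∑ a : V × V, (if a.2 = w then h a else 0) := by
      have hle : h (v, w) ≤ ∑ a : V × V, (if a.2 = w then h a else 0) := by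
        have := Finset.single_le_sum (f := fun a : V × V => if a.2 = w then h a else 0)
          (fun a _ => by split
                         · exact h0 a
                         · exact le_refl 0) (Finset.mem_univ (v, w))
        simpa using this
      linarith
    rw [← hcons] at h2
    have h3 : ∑ a : V × V, (if a.1 = w then h a else 0) ≤ 0 := by
      apply Finset.sum_nonpos
      intro a _
      obtain ⟨x, y⟩ := a
      dsimp only
      by_cases hx : x = w
      · subst hx
        simp only [if_pos rfl]
        exact (hc y)
      · simp [hx]
    linarith
  let next : V → V := fun v => if hv : ∃ w, 0 < h (v, w) then hv.choose else v
  have next_spec : ∀ v, (∃ w, 0 < h (v, w)) → 0 < h (v, next v) := by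
    intro v hv
    have he : next v = hv.choose := dif_pos hv
    rw [he]; exact hv.choose_spec
  let g : ℕ → V := fun n => next^[n] a₀.1
  have gsucc : ∀ n, g (n + 1) = next (g n) := fun n => Function.iterate_succ_apply' next n a₀.1
  have inv : ∀ n, ∃ w, 0 < h (g n, w) := by
    intro n
    induction n with
    | zero => exact ⟨a₀.2, by simpa [g] using ha₀⟩
    | succ n ih =>
      rw [gsucc]
      exact step _ _ (next_spec _ ih)
  have hg : ∀ n, 0 < h (g n, g (n + 1)) := fun n => by
    rw [gsucc]; exact next_spec _ (inv n)
  obtain ⟨m₀, n₀, hne, heq⟩ := Finite.exists_ne_map_eq_of_infinite g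
  have hP : ∃ n, ∃ m, m < n ∧ g m = g n := by
    rcases Nat.lt_or_ge m₀ n₀ with hlt | hge
    · exact ⟨n₀, m₀, hlt, heq⟩
    · exact ⟨m₀, n₀, by omega, heq.symm⟩
  set N := Nat.find hP with hNdef
  obtain ⟨m, hmN, hgmN⟩ := Nat.find_spec hP
  rw [← hNdef] at hmN hgmN
  have hmin : ∀ j, j < N → ∀ i, i < j → g i ≠ g j := by
    intro j hj i hij hgij
    exact Nat.find_min hP hj ⟨i, hij, hgij⟩
  have hr2 : 2 ≤ N - m := by
    by_contra hlt
    have h1 : N = m + 1 := by omega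
    have h2 := hg m
    rw [h1] at hgmN
    rw [← hgmN] at h2
    rw [hloop] at h2
    exact lt_irrefl 0 h2
  set r := N - m with hrdef
  let verts : List V := (List.range r).map (fun i => g (m + i))
  have hlen : verts.length = r := by simp [verts]
  have hget : ∀ i (hi : i < r), verts[i]'(by rw [hlen]; exact hi) = g (m + i) := by
    intro i hi; simp [verts]
  have hnodup : verts.Nodup := by
    apply List.Nodup.map_on ?_ (List.nodup_range : (List.range r).Nodup)
    intro x hx y hy hxy
    simp only [List.mem_range] at hx hy
    by_contra hne2
    rcases Nat.lt_or_ge x y with h1 | h1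
    · exact hmin (m + y) (by omega) (m + x) (by omega) hxy
    · exact hmin (m + x) (by omega) (m + y) (by omega) hxy.symm
  refine ⟨⟨verts, hnodup, by omega⟩, ?_⟩
  intro a ha
  have ha' : a ∈ verts.zip (verts.rotate 1) := List.mem_toFinset.mp ha
  obtain ⟨k, hk, hka⟩ := List.mem_iff_getElem.mp ha'
  have hk' : k < r := by simpa [hlen] using hk
  have hget' : ∀ (i : ℕ) (hi : i < verts.length) (j : ℕ), i = j → ∀ hj : j < r,
      verts[i]'hi = g (m + j) := by
    intro i hi j hij hj
    subst hij
    exact hget i hj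
  have hkz : k < (verts.zip (verts.rotate 1)).length := hk
  have hfst : a.1 = verts[k]'(by rw [hlen]; exact hk') := by
    rw [← hka, List.getElem_zip]
  have hsnd : a.2 = verts[(k + 1) % verts.length]'(by
      rw [hlen]; exact Nat.mod_lt _ (by omega)) := by
    rw [← hka, List.getElem_zip]
    exact List.getElem_rotate verts 1 k (by simpa [hlen] using hk')
  by_cases hkr : k + 1 < r
  · have hv1 : a.1 = g (m + k) := by rw [hfst]; exact hget' _ _ k rfl hk'
    have hv2 : a.2 = g (m + (k + 1)) := by
      rw [hsnd]; exact hget' _ _ (k + 1) (by rw [hlen]; exact Nat.mod_eq_of_lt hkr) hkr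
    have hae : a = (g (m + k), g (m + k + 1)) := Prod.ext_iff.mpr ⟨hv1, hv2⟩
    rw [hae]
    exact hg (m + k)
  · have hk1 : k + 1 = r := by omega
    have hv1 : a.1 = g (m + k) := by rw [hfst]; exact hget' _ _ k rfl hk'
    have hv2 : a.2 = g (m + 0) := by
      rw [hsnd]
      exact hget' _ _ 0 (by rw [hlen, hk1]; exact Nat.mod_self r) (by omega)
    have hae : a = (g (m + k), g m) := Prod.ext_iff.mpr ⟨hv1, hv2⟩
    rw [hae, show m + k = N - 1 by omega, hgmN]
    have h2 := hg (N - 1)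
    rw [show N - 1 + 1 = N by omega] at h2
    exact h2

end FlowDecompAux2

section FlowDecompAux3
variable {V : Type} [Fintype V] [DecidableEq V]

private lemma circ_decomp (n : ℕ) : ∀ (h : V × V → ℤ), (∑ a : V × V, h a) ≤ (n : ℤ) →
    (∀ a, 0 ≤ h a) → (∀ v, h (v, v) = 0) →
    (∀ i, ∑ a : V × V, (if a.1 = i then h a else 0)
        = ∑ a : V × V, (if a.2 = i then h a else 0)) →
    ∃ (k : ℕ) (C : Fin k → Cyc V),
      (∀ j, ∀ a ∈ (C j).arcs, 0 < h a) ∧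
      (∀ a, h a = ∑ j, if a ∈ (C j).arcs then (1 : ℤ) else 0) := by
  induction n with
  | zero =>
    intro h hsum h0 _ _
    have hz : ∀ a, h a = 0 := by
      have hs0 : ∑ a : V × V, h a = 0 :=
        le_antisymm (by exact_mod_cast hsum) (Finset.sum_nonneg fun a _ => h0 a)
      intro a
      exact (Finset.sum_eq_zero_iff_of_nonneg (fun a _ => h0 a)).mp hs0 a (Finset.mem_univ a)
    exact ⟨0, Fin.elim0, fun j => j.elim0, fun a => by simp [hz a]⟩
  | succ n ih =>
    intro h hsum h0 hloop hcons
    by_cases hex : ∃ a, 0 < h a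
    · obtain ⟨a₀, ha₀⟩ := hex
      obtain ⟨C₀, hC₀⟩ := exists_good_cycle h h0 hloop hcons a₀ ha₀
      set h' : V × V → ℤ := fun a => h a - (if a ∈ C₀.arcs then 1 else 0) with hh'
      have h'0 : ∀ a, 0 ≤ h' a := by
        intro a
        simp only [hh']
        split
        · have := hC₀ a ‹_›; omega
        · have := h0 a; omega
      have h'loop : ∀ v, h' (v, v) = 0 := by
        intro v
        have hm : (v, v) ∉ C₀.arcs := fun hm => by
          have := hC₀ _ hm; rw [hloop v] at this; exact lt_irrefl 0 this
        simp [hh', hm, hloop v]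
      have h'cons : ∀ i, ∑ a : V × V, (if a.1 = i then h' a else 0)
          = ∑ a : V × V, (if a.2 = i then h' a else 0) := by
        intro i
        have e1 : ∑ a : V × V, (if a.1 = i then h' a else 0)
            = ∑ a : V × V, (if a.1 = i then h a else 0)
            - ∑ a : V × V, (if a.1 = i then (if a ∈ C₀.arcs then (1:ℤ) else 0) else 0) := by
          rw [← Finset.sum_sub_distrib]
          apply Finset.sum_congr rfl
          intro a _
          split <;> simp [hh']
        have e2 : ∑ a : V × V, (if a.2 = i then h' a else 0)
            = ∑ a : V × V, (if a.2 = i then h a else 0)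
            - ∑ a : V × V, (if a.2 = i then (if a ∈ C₀.arcs then (1:ℤ) else 0) else 0) := by
          rw [← Finset.sum_sub_distrib]
          apply Finset.sum_congr rfl
          intro a _
          split <;> simp [hh']
        rw [e1, e2, hcons i, Cyc.cons_eq C₀ i]
      have hcard : (1 : ℤ) ≤ (C₀.arcs.card : ℤ) := by
        have h1 : 0 < C₀.arcs.card := by
          rw [Cyc.card_arcs]; have := C₀.two_le; omega
        exact_mod_cast h1
      have hsum' : ∑ a : V × V, h' a ≤ (n : ℤ) := by
        have e : ∑ a : V × V, h' a = ∑ a : V × V, h a - (C₀.arcs.card : ℤ) := by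
          simp only [hh']
          rw [Finset.sum_sub_distrib]
          congr 1
          rw [Finset.sum_ite_mem, Finset.univ_inter]
          simp
        rw [e]
        have h1 : (∑ a : V × V, h a) ≤ (n : ℤ) + 1 := by push_cast at hsum ⊢; linarith
        omega
      obtain ⟨k, C, hCsupp, hCeq⟩ := ih h' hsum' h'0 h'loop h'cons
      refine ⟨k + 1, Fin.cons C₀ C, ?_, ?_⟩
      · intro j
        refine Fin.cases ?_ ?_ j
        · simpa using hC₀
        · intro j' a ha
          have h1 : 0 < h' a := hCsupp j' a (by simpa using ha)
          simp only [hh'] at h1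
          split at h1 <;> omega
      · intro a
        rw [Fin.sum_univ_succ]
        have h1 := hCeq a
        simp only [Fin.cons_succ, Fin.cons_zero]
        rw [← h1]
        simp [hh']
    · push_neg at hex
      have hz : ∀ a, h a = 0 := fun a => le_antisymm (hex a) (h0 a)
      exact ⟨0, Fin.elim0, fun j => j.elim0, fun a => by simp [hz a]⟩

end FlowDecompAux3


/-- **Flow decomposition.** If `f` and `f'` are two feasible integer flows of the same
network, then there are finitely many directed cycles `C_1, …, C_k` in the residual graph
`D_f` and positive integers `λ_1, …, λ_k` with `f' = f + ∑ λ_j χ(C_j)` and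
`c(f') = c(f) + ∑ λ_j c(f, C_j)`. -/
theorem flow_decomposition (N : Network V) (hN : N.Wellformed)
    (f f' : V × V → ℤ) (hf : N.Feasible f) (hf' : N.Feasible f') :
    ∃ (k : ℕ) (C : Fin k → Cyc V) (lam : Fin k → ℤ),
      (∀ j, N.IsResCycle f (C j)) ∧ (∀ j, 0 < lam j) ∧
      (∀ a ∈ N.A, f' a = f a + ∑ j, lam j * N.chi (C j) a) ∧
      N.cost f' = N.cost f + ∑ j, (lam j : ℝ) * N.cycCost (C j) := by
  obtain ⟨hanti, hlu⟩ := hN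
  obtain ⟨hfcap, hf0, hfbal⟩ := hf
  obtain ⟨hf'cap, hf'0, hf'bal⟩ := hf'
  set d : V × V → ℤ := fun a => f' a - f a with hd
  have hd0 : ∀ a, a ∉ N.A → d a = 0 := fun a ha => by simp [hd, hf0 a ha, hf'0 a ha]
  have hnoself : ∀ v, (v, v) ∉ N.A := fun v hv => hanti _ hv hv
  have hdsw : ∀ a ∈ N.A, d (a.2, a.1) = 0 := fun a ha => hd0 _ (fun hmem => hanti a ha hmem)
  set h : V × V → ℤ := fun a => ((d a).toNat : ℤ) + (((-(d (a.2, a.1))).toNat : ℤ)) with hh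
  have h0 : ∀ a, 0 ≤ h a := fun a => by simp only [hh]; omega
  have hloopz : ∀ v, h (v, v) = 0 := by
    intro v
    have h1 := hd0 (v, v) (hnoself v)
    simp only [hh]
    omega
  -- conservation of d
  have hdfil : ∀ (p : V × V → Prop) (_ : DecidablePred p),
      ∑ a : V × V, (if p a then d a else 0) = ∑ a ∈ N.A.filter p, d a := by
    intro p _
    rw [Finset.sum_filter]
    symm
    apply Finset.sum_subset (Finset.subset_univ N.A)
    intro a _ ha
    rw [hd0 a ha]
    simp
  have hdcons : ∀ i, ∑ a : V × V, (if a.1 = i then d a else 0)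
      = ∑ a : V × V, (if a.2 = i then d a else 0) := by
    intro i
    rw [hdfil _ inferInstance, hdfil _ inferInstance]
    have l1 : ∑ a ∈ N.A.filter (fun a => a.1 = i), d a
        = ∑ a ∈ N.A.filter (fun a => a.1 = i), f' a - ∑ a ∈ N.A.filter (fun a => a.1 = i), f a := by
      rw [← Finset.sum_sub_distrib]
    have l2 : ∑ a ∈ N.A.filter (fun a => a.2 = i), d a
        = ∑ a ∈ N.A.filter (fun a => a.2 = i), f' a - ∑ a ∈ N.A.filter (fun a => a.2 = i), f a := by
      rw [← Finset.sum_sub_distrib]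
    have b1 := hfbal i
    have b2 := hf'bal i
    rw [l1, l2]
    linarith
  -- conservation of h
  have hhcons : ∀ i, ∑ a : V × V, (if a.1 = i then h a else 0)
      = ∑ a : V × V, (if a.2 = i then h a else 0) := by
    intro i
    have swap1 : ∑ a : V × V, (if a.2 = i then ((-(d a)).toNat : ℤ) else 0)
        = ∑ a : V × V, (if a.1 = i then ((-(d (a.2, a.1))).toNat : ℤ) else 0) :=
      Fintype.sum_equiv (Equiv.prodComm V V) _ _ (fun a => by rcases a with ⟨x, y⟩; rfl)
    have swap2 : ∑ a : V × V, (if a.1 = i then ((-(d a)).toNat : ℤ) else 0)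
        = ∑ a : V × V, (if a.2 = i then ((-(d (a.2, a.1))).toNat : ℤ) else 0) :=
      Fintype.sum_equiv (Equiv.prodComm V V) _ _ (fun a => by rcases a with ⟨x, y⟩; rfl)
    have e1 : ∑ a : V × V, (if a.1 = i then h a else 0)
        = ∑ a : V × V, (if a.1 = i then ((d a).toNat : ℤ) else 0)
        + ∑ a : V × V, (if a.1 = i then ((-(d (a.2, a.1))).toNat : ℤ) else 0) := by
      rw [← Finset.sum_add_distrib]
      apply Finset.sum_congr rfl
      intro a _
      simp only [hh]
      split <;> simp
    have e2 : ∑ a : V × V, (if a.2 = i then h a else 0)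
        = ∑ a : V × V, (if a.2 = i then ((d a).toNat : ℤ) else 0)
        + ∑ a : V × V, (if a.2 = i then ((-(d (a.2, a.1))).toNat : ℤ) else 0) := by
      rw [← Finset.sum_add_distrib]
      apply Finset.sum_congr rfl
      intro a _
      simp only [hh]
      split <;> simp
    have e3 : ∑ a : V × V, (if a.1 = i then ((d a).toNat : ℤ) else 0)
        - ∑ a : V × V, (if a.1 = i then ((-(d a)).toNat : ℤ) else 0)
        = ∑ a : V × V, (if a.1 = i then d a else 0) := by
      rw [← Finset.sum_sub_distrib]
      apply Finset.sum_congr rfl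
      intro a _
      split <;> omega
    have e4 : ∑ a : V × V, (if a.2 = i then ((d a).toNat : ℤ) else 0)
        - ∑ a : V × V, (if a.2 = i then ((-(d a)).toNat : ℤ) else 0)
        = ∑ a : V × V, (if a.2 = i then d a else 0) := by
      rw [← Finset.sum_sub_distrib]
      apply Finset.sum_congr rfl
      intro a _
      split <;> omega
    have hc := hdcons i
    rw [e1, e2, ← swap1, ← swap2]
    linarith
  obtain ⟨k, C, hsupp, heqh⟩ := circ_decomp (∑ a : V × V, h a).toNat h
    (Int.self_le_toNat _) h0 hloopz hhcons
  have hmemA : ∀ a, 0 < h a → (a ∈ N.A ∧ 0 < d a) ∨ ((a.2, a.1) ∈ N.A ∧ d (a.2, a.1) < 0) := by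
    intro a ha
    by_cases hA : a ∈ N.A
    · left
      refine ⟨hA, ?_⟩
      have h1 := hdsw a hA
      simp only [hh] at ha
      omega
    · right
      have hda := hd0 a hA
      by_cases hA' : (a.2, a.1) ∈ N.A
      · refine ⟨hA', ?_⟩
        simp only [hh] at ha
        omega
      · exfalso
        have h1 := hd0 _ hA'
        simp only [hh] at ha
        omega
  have notboth : ∀ a, 0 < h a → ¬ 0 < h (a.2, a.1) := by
    rintro ⟨x, y⟩ ha hb
    rcases hmemA (x, y) ha with ⟨hA, hda⟩ | ⟨hA, hda⟩ <;>
      rcases hmemA (y, x) hb with ⟨hB, hdb⟩ | ⟨hB, hdb⟩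
    · exact hanti (x, y) hA hB
    · have hdb' : d (x, y) < 0 := hdb
      omega
    · have hda' : d (y, x) < 0 := hda
      omega
    · have hB' : (x, y) ∈ N.A := hB
      exact hanti (x, y) hB' hA
  refine ⟨k, C, fun _ => 1, ?_, fun j => one_pos, ?_, ?_⟩
  · -- residual cycles
    intro j a ha
    have hpos := hsupp j a ha
    rcases hmemA a hpos with ⟨hA, hda⟩ | ⟨hA, hda⟩
    · apply Finset.mem_union_left
      rw [Finset.mem_filter]
      refine ⟨hA, ?_⟩
      have h1 := (hf'cap a hA).2
      simp only [hd] at hda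
      omega
    · apply Finset.mem_union_right
      rw [Finset.mem_image]
      refine ⟨(a.2, a.1), Finset.mem_filter.mpr ⟨hA, ?_⟩, by simp⟩
      have h1 := (hf'cap _ hA).1
      simp only [hd] at hda
      omega
  · -- flow equation
    intro a haA
    beta_reduce
    have hchi : ∀ j, N.chi (C j) a
        = (if a ∈ (C j).arcs then (1:ℤ) else 0) - (if (a.2, a.1) ∈ (C j).arcs then (1:ℤ) else 0) := by
      intro j
      by_cases h1 : a ∈ (C j).arcs <;> by_cases h2 : (a.2, a.1) ∈ (C j).arcs
      · exact absurd (hsupp j _ h2) (notboth a (hsupp j _ h1))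
      · simp [Network.chi, Cyc.chi, haA, h1, h2]
      · simp [Network.chi, Cyc.chi, haA, h1, h2]
      · simp [Network.chi, Cyc.chi, haA, h1, h2]
    have hda : d a = h a - h (a.2, a.1) := by
      have h1 := hdsw a haA
      have e : d ((a.2, a.1).2, (a.2, a.1).1) = d a := by simp
      simp only [hh]
      rw [e]
      omega
    have hs : ∑ j, (1:ℤ) * N.chi (C j) a
        = ∑ j, ((if a ∈ (C j).arcs then (1:ℤ) else 0) - (if (a.2, a.1) ∈ (C j).arcs then (1:ℤ) else 0)) :=
      Finset.sum_congr rfl (fun j _ => by rw [one_mul, hchi j])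
    rw [hs, Finset.sum_sub_distrib, ← heqh a, ← heqh (a.2, a.1), ← hda]
    simp only [hd]
    ring
  · -- cost equation
    beta_reduce
    simp only [Int.cast_one]
    have hcyc : ∀ j, N.cycCost (C j) = ∑ a : V × V, (if a ∈ (C j).arcs then N.resCost a else 0) := by
      intro j
      rw [Finset.sum_ite_mem, Finset.univ_inter]
      rfl
    have step1 : ∑ j, (1:ℝ) * N.cycCost (C j) = ∑ a : V × V, (h a : ℝ) * N.resCost a := by
      calc ∑ j, (1:ℝ) * N.cycCost (C j)
          = ∑ j, ∑ a : V × V, (if a ∈ (C j).arcs then N.resCost a else 0) := by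
            apply Finset.sum_congr rfl
            intro j _
            rw [one_mul, hcyc j]
        _ = ∑ a : V × V, ∑ j, (if a ∈ (C j).arcs then N.resCost a else 0) := Finset.sum_comm
        _ = ∑ a : V × V, (h a : ℝ) * N.resCost a := by
            apply Finset.sum_congr rfl
            intro a _
            have e : ((h a : ℤ) : ℝ) = ∑ j, (if a ∈ (C j).arcs then (1:ℝ) else 0) := by
              rw [heqh a]
              push_cast
              apply Finset.sum_congr rfl
              intro j _
              split <;> simp
            rw [e, Finset.sum_mul]
            apply Finset.sum_congr rfl
            intro j _
            split <;> simp
    have hT : ∀ a : V × V, (h a : ℝ) * N.resCost a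
        = (if a ∈ N.A then (h a : ℝ) * N.c a else 0)
        + (if (a.2, a.1) ∈ N.A then (h a : ℝ) * (-(N.c (a.2, a.1))) else 0) := by
      intro a
      by_cases hA : a ∈ N.A
      · have h1 : (a.2, a.1) ∉ N.A := hanti a hA
        simp [Network.resCost, hA, h1]
      · by_cases hA' : (a.2, a.1) ∈ N.A
        · simp [Network.resCost, hA, hA']
        · have h1 : h a = 0 := by
            have h2 := hd0 a hA
            have h3 := hd0 _ hA'
            simp only [hh]
            omega
          simp [h1, hA, hA']
    have swapc : ∑ a : V × V, (if (a.2, a.1) ∈ N.A then (h a : ℝ) * (-(N.c (a.2, a.1))) else 0)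
        = ∑ a : V × V, (if a ∈ N.A then (h (a.2, a.1) : ℝ) * (-(N.c a)) else 0) :=
      (Fintype.sum_equiv (Equiv.prodComm V V) _ _ (fun a => by rcases a with ⟨x, y⟩; rfl)).symm
    have step2 : ∑ a : V × V, (h a : ℝ) * N.resCost a = ∑ a ∈ N.A, (d a : ℝ) * N.c a := by
      calc ∑ a : V × V, (h a : ℝ) * N.resCost a
          = ∑ a : V × V, ((if a ∈ N.A then (h a : ℝ) * N.c a else 0)
            + (if (a.2, a.1) ∈ N.A then (h a : ℝ) * (-(N.c (a.2, a.1))) else 0)) :=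
            Finset.sum_congr rfl (fun a _ => hT a)
        _ = ∑ a : V × V, (if a ∈ N.A then (h a : ℝ) * N.c a else 0)
            + ∑ a : V × V, (if (a.2, a.1) ∈ N.A then (h a : ℝ) * (-(N.c (a.2, a.1))) else 0) :=
            Finset.sum_add_distrib
        _ = ∑ a : V × V, (if a ∈ N.A then (h a : ℝ) * N.c a + (h (a.2, a.1) : ℝ) * (-(N.c a)) else 0) := by
            rw [swapc, ← Finset.sum_add_distrib]
            apply Finset.sum_congr rfl
            intro a _
            split <;> simp
        _ = ∑ a ∈ N.A, ((h a : ℝ) * N.c a + (h (a.2, a.1) : ℝ) * (-(N.c a))) := by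
            rw [Finset.sum_ite_mem, Finset.univ_inter]
        _ = ∑ a ∈ N.A, (d a : ℝ) * N.c a := by
            apply Finset.sum_congr rfl
            intro a haA
            have hda : d a = h a - h (a.2, a.1) := by
              have h1 := hdsw a haA
              have e : d ((a.2, a.1).2, (a.2, a.1).1) = d a := by simp
              simp only [hh]
              rw [e]
              omega
            rw [hda]
            push_cast
            ring
    have hcost : N.cost f' = N.cost f + ∑ a ∈ N.A, (d a : ℝ) * N.c a := by
      rw [Network.cost, Network.cost, ← Finset.sum_add_distrib]
      apply Finset.sum_congr rfl
      intro a _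
      simp only [hd]
      push_cast
      ring
    rw [hcost, step1, step2]
end
end

section
/- Let f and f' be two optimal integer flows of the same network and let y be an optimal node potential for f. If f_{ij} ≠ f'_{ij} for some arc (i,j)∈A, then the reduced cost c̄_{ij} = c_{ij} + y_i − y_j equals 0. -/
open scoped Classical
noncomputable section

variable {V : Type} [Fintype V] [DecidableEq V]

private lemma sum_pot_fst (N : Network V) (y : V → ℝ) (g : V × V → ℤ) :
    ∑ a ∈ N.A, y a.1 * (g a : ℝ)
      = ∑ i : V, y i * ((∑ a ∈ N.A.filter fun a => a.1 = i, g a : ℤ) : ℝ) := by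
  rw [← Finset.sum_fiberwise_of_maps_to (g := fun a : V × V => a.1)
      (fun x _ => Finset.mem_univ _) (fun a => y a.1 * (g a : ℝ))]
  refine Finset.sum_congr rfl fun i _ => ?_
  push_cast
  rw [Finset.mul_sum]
  refine Finset.sum_congr rfl fun a haf => ?_
  rw [(Finset.mem_filter.mp haf).2]

private lemma sum_pot_snd (N : Network V) (y : V → ℝ) (g : V × V → ℤ) :
    ∑ a ∈ N.A, y a.2 * (g a : ℝ)
      = ∑ i : V, y i * ((∑ a ∈ N.A.filter fun a => a.2 = i, g a : ℤ) : ℝ) := by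
  rw [← Finset.sum_fiberwise_of_maps_to (g := fun a : V × V => a.2)
      (fun x _ => Finset.mem_univ _) (fun a => y a.2 * (g a : ℝ))]
  refine Finset.sum_congr rfl fun i _ => ?_
  push_cast
  rw [Finset.mul_sum]
  refine Finset.sum_congr rfl fun a haf => ?_
  rw [(Finset.mem_filter.mp haf).2]

/-- If `f` and `f'` are optimal integer flows and `y` is an optimal node potential for `f`,
then `f` and `f'` can only differ on arcs with zero reduced cost. -/
theorem redCost_eq_zero_of_flows_differ (N : Network V) (hN : N.Wellformed)
    (f f' : V × V → ℤ) (hf : N.Optimal f) (hf' : N.Optimal f')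
    (y : V → ℝ) (hy : N.OptPotential f y)
    (a : V × V) (ha : a ∈ N.A) (hne : f a ≠ f' a) :
    N.redCost y a = 0 := by
  set g : V × V → ℤ := fun a => f' a - f a with hg
  -- each term of the reduced-cost sum is nonnegative
  have hterm : ∀ b ∈ N.A, 0 ≤ N.redCost y b * (g b : ℝ) := by
    intro b hb
    rcases lt_trichotomy (f b) (f' b) with hlt | heq | hgt
    · -- forward residual arc
      have hmem : b ∈ N.resArcs f := by
        apply Finset.mem_union_left
        exact Finset.mem_filter.mpr ⟨hb, lt_of_lt_of_le hlt (hf'.1.1 b hb).2⟩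
      have h0 := hy b hmem
      have hrc : N.resCost b = N.c b := if_pos hb
      have : 0 ≤ N.redCost y b := by
        simpa [Network.resRedCost, Network.redCost, hrc] using h0
      have hgpos : (0 : ℝ) < (g b : ℝ) := by
        have : 0 < g b := by simp [hg]; omega
        exact_mod_cast this
      positivity
    · simp [hg, heq]
    · -- backward residual arc
      have hmem : (b.2, b.1) ∈ N.resArcs f := by
        apply Finset.mem_union_right
        refine Finset.mem_image.mpr ⟨b, ?_, rfl⟩
        exact Finset.mem_filter.mpr ⟨hb, lt_of_le_of_lt (hf'.1.1 b hb).1 hgt⟩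
      have h0 := hy _ hmem
      have hnb : (b.2, b.1) ∉ N.A := hN.1 b hb
      have hrc : N.resCost (b.2, b.1) = -N.c b := by
        simp [Network.resCost, hnb]
      have hle : N.redCost y b ≤ 0 := by
        have := h0
        simp only [Network.resRedCost, hrc] at this
        simp only [Network.redCost]
        linarith
      have hgneg : (g b : ℝ) ≤ 0 := by
        have : g b ≤ 0 := by simp [hg]; omega
        exact_mod_cast this
      nlinarith [mul_nonneg (neg_nonneg.mpr hle) (neg_nonneg.mpr hgneg)]
  -- the sum of the terms is the cost difference, which is zero
  have hcost : N.cost f' = N.cost f :=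
    le_antisymm (hf.2 f' hf'.1) (hf'.2 f hf.1) ▸ rfl
  have hcost' : N.cost f ≤ N.cost f' := hf.2 f' hf'.1
  have hcost'' : N.cost f' ≤ N.cost f := hf'.2 f hf.1
  have hbal : ∀ i : V,
      ((∑ b ∈ N.A.filter fun b => b.1 = i, g b) - ∑ b ∈ N.A.filter fun b => b.2 = i, g b) = 0 := by
    intro i
    have h1 := hf.1.2.2 i
    have h2 := hf'.1.2.2 i
    simp only [hg]
    rw [Finset.sum_sub_distrib, Finset.sum_sub_distrib]
    omega
  have hpot : ∑ b ∈ N.A, (y b.1 - y b.2) * (g b : ℝ) = 0 := by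
    have := sum_pot_fst N y g
    have := sum_pot_snd N y g
    calc ∑ b ∈ N.A, (y b.1 - y b.2) * (g b : ℝ)
        = ∑ b ∈ N.A, y b.1 * (g b : ℝ) - ∑ b ∈ N.A, y b.2 * (g b : ℝ) := by
          rw [← Finset.sum_sub_distrib]; exact Finset.sum_congr rfl fun b _ => by ring
      _ = ∑ i : V, y i * (((∑ b ∈ N.A.filter fun b => b.1 = i, g b)
              - ∑ b ∈ N.A.filter fun b => b.2 = i, g b : ℤ) : ℝ) := by
          rw [sum_pot_fst N y g, sum_pot_snd N y g, ← Finset.sum_sub_distrib]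
          refine Finset.sum_congr rfl fun i _ => ?_
          push_cast; ring
      _ = 0 := by
          refine Finset.sum_eq_zero fun i _ => ?_
          rw [hbal i]; simp
  have hsum : ∑ b ∈ N.A, N.redCost y b * (g b : ℝ) = 0 := by
    have hcsum : ∑ b ∈ N.A, N.c b * (g b : ℝ) = 0 := by
      have : ∑ b ∈ N.A, N.c b * (g b : ℝ)
          = N.cost f' - N.cost f := by
        simp only [Network.cost, ← Finset.sum_sub_distrib, hg]
        refine Finset.sum_congr rfl fun b _ => ?_
        push_cast; ring
      rw [this]; linarith
    calc ∑ b ∈ N.A, N.redCost y b * (g b : ℝ)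
        = ∑ b ∈ N.A, (N.c b * (g b : ℝ) + (y b.1 - y b.2) * (g b : ℝ)) := by
          refine Finset.sum_congr rfl fun b _ => ?_
          simp only [Network.redCost]; ring
      _ = 0 := by rw [Finset.sum_add_distrib, hcsum, hpot]; ring
  have hzero := (Finset.sum_eq_zero_iff_of_nonneg hterm).mp hsum a ha
  have hgne : (g a : ℝ) ≠ 0 := by
    have : g a ≠ 0 := by simp [hg]; omega
    exact_mod_cast this
  rcases mul_eq_zero.mp hzero with h | h
  · exact h
  · exact absurd h hgne
end
end

section
/- Let f be an optimal integer flow of the network D, y an optimal node potential, and D' the reduced network. Then an integer function f' on A' is a feasible integer flow of D' if and only if the combined flow f*, defined by f*(a) = f'(a) for a∈A' and f*(a) = f(a) for a∈X, is an optimal integer flow of D. -/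
open scoped Classical
noncomputable section

variable {V : Type} [Fintype V] [DecidableEq V]

namespace Network

/-- The reduced network `D' = (V, A∖X)` where `X` is the set of arcs with nonzero reduced
cost, with balances adapted by the flow `f` on the removed arcs. -/
def reduced (N : Network V) (f : V × V → ℤ) (y : V → ℝ) : Network V where
  A := N.A.filter fun a => N.redCost y a = 0
  l := N.l
  u := N.u
  c := N.c
  b := fun i =>
    N.b i
      - ∑ a ∈ (N.A.filter fun a => N.redCost y a ≠ 0).filter (fun a => a.1 = i), f a
      + ∑ a ∈ (N.A.filter fun a => N.redCost y a ≠ 0).filter (fun a => a.2 = i), f a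

end Network

/-- Let `f` be an optimal integer flow of `D`, `y` an optimal node potential and `D'` the
reduced network. An integer function `f'` on `A'` is a feasible flow of `D'` iff the
combined flow `f*` (equal to `f'` on `A'` and to `f` on `X`) is an optimal flow of `D`. -/
theorem reduced_feasible_iff_optimal (N : Network V) (hN : N.Wellformed)
    (f : V × V → ℤ) (hf : N.Optimal f) (y : V → ℝ) (hy : N.OptPotential f y)
    (f' : V × V → ℤ) (hf'0 : ∀ a ∉ (N.reduced f y).A, f' a = 0) :
    (N.reduced f y).Feasible f' ↔
      N.Optimal (fun a => if a ∈ (N.reduced f y).A then f' a else f a) := by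
  classical
  obtain ⟨⟨hfcap, hf0, hfbal⟩, hfopt⟩ := hf
  set A' : Finset (V × V) := N.A.filter (fun a => N.redCost y a = 0) with hA'def
  have hA' : (N.reduced f y).A = A' := rfl
  set F : V × V → ℤ := fun a => if a ∈ A' then f' a else f a with hFdef
  -- complementary slackness
  have cs1 : ∀ a ∈ N.A, 0 < N.redCost y a → f a = N.l a := by
    intro a ha hpos
    by_contra hne
    have hlt : N.l a < f a := lt_of_le_of_ne (hfcap a ha).1 (Ne.symm hne)
    have hmem : (a.2, a.1) ∈ N.resArcs f := by
      refine Finset.mem_union_right _ ?_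
      exact Finset.mem_image.2 ⟨a, Finset.mem_filter.2 ⟨ha, hlt⟩, rfl⟩
    have h0 := hy _ hmem
    have hna : (a.2, a.1) ∉ N.A := hN.1 a ha
    unfold Network.resRedCost Network.resCost at h0
    rw [if_neg hna] at h0
    unfold Network.redCost at hpos
    simp only [Prod.mk.eta] at h0
    linarith
  have cs2 : ∀ a ∈ N.A, N.redCost y a < 0 → f a = N.u a := by
    intro a ha hneg
    by_contra hne
    have hlt : f a < N.u a := lt_of_le_of_ne (hfcap a ha).2 hne
    have hmem : a ∈ N.resArcs f :=
      Finset.mem_union_left _ (Finset.mem_filter.2 ⟨ha, hlt⟩)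
    have h0 := hy _ hmem
    unfold Network.resRedCost Network.resCost at h0
    rw [if_pos ha] at h0
    unfold Network.redCost at hneg
    linarith
  -- cost in terms of reduced costs
  have costeq : ∀ g : V × V → ℤ, N.Feasible g →
      N.cost g = (∑ a ∈ N.A, N.redCost y a * (g a : ℝ)) - ∑ i, y i * (N.b i : ℝ) := by
    intro g hg
    have h1 : ∑ a ∈ N.A, y a.1 * (g a : ℝ)
        = ∑ i, y i * ∑ a ∈ N.A.filter (fun a => a.1 = i), (g a : ℝ) := by
      rw [← Finset.sum_fiberwise N.A (fun a => a.1) (fun a => y a.1 * (g a : ℝ))]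
      refine Finset.sum_congr rfl fun i _ => ?_
      rw [Finset.mul_sum]
      exact Finset.sum_congr rfl fun a ha => by rw [(Finset.mem_filter.1 ha).2]
    have h2 : ∑ a ∈ N.A, y a.2 * (g a : ℝ)
        = ∑ i, y i * ∑ a ∈ N.A.filter (fun a => a.2 = i), (g a : ℝ) := by
      rw [← Finset.sum_fiberwise N.A (fun a => a.2) (fun a => y a.2 * (g a : ℝ))]
      refine Finset.sum_congr rfl fun i _ => ?_
      rw [Finset.mul_sum]
      exact Finset.sum_congr rfl fun a ha => by rw [(Finset.mem_filter.1 ha).2]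
    have h3 : ∑ a ∈ N.A, N.redCost y a * (g a : ℝ)
        = N.cost g + ∑ a ∈ N.A, y a.1 * (g a : ℝ) - ∑ a ∈ N.A, y a.2 * (g a : ℝ) := by
      unfold Network.cost Network.redCost
      rw [← Finset.sum_add_distrib, ← Finset.sum_sub_distrib]
      exact Finset.sum_congr rfl fun a _ => by ring
    have h4 : ∑ i, y i * (N.b i : ℝ)
        = ∑ a ∈ N.A, y a.1 * (g a : ℝ) - ∑ a ∈ N.A, y a.2 * (g a : ℝ) := by
      rw [h1, h2, ← Finset.sum_sub_distrib]
      refine Finset.sum_congr rfl fun i _ => ?_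
      rw [← mul_sub]
      congr 1
      have := hg.2.2 i
      exact_mod_cast this.symm
    rw [h3, h4]; ring
  -- sum splitting for F
  have hXA : ∀ (q : V × V → Prop) [DecidablePred q],
      (∑ a ∈ N.A.filter q, F a)
        = (∑ a ∈ A'.filter q, f' a)
          + ∑ a ∈ (N.A.filter fun a => N.redCost y a ≠ 0).filter q, f a := by
    intro q _
    rw [← Finset.sum_filter_add_sum_filter_not (N.A.filter q)
        (fun a => N.redCost y a = 0) F]
    congr 1
    · rw [Finset.filter_comm]
      refine Finset.sum_congr rfl fun a ha => ?_
      have : a ∈ A' := (Finset.mem_filter.1 ha).1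
      simp only [hFdef, if_pos this]
    · rw [Finset.filter_comm]
      refine Finset.sum_congr rfl fun a ha => ?_
      have hnq : ¬ N.redCost y a = 0 := (Finset.mem_filter.1 (Finset.mem_filter.1 ha).1).2
      have : a ∉ A' := fun hmem => hnq (Finset.mem_filter.1 hmem).2
      simp only [hFdef, if_neg this]
  -- feasibility transfer
  have hfeas_iff : (N.reduced f y).Feasible f' ↔ N.Feasible F := by
    constructor
    · rintro ⟨hcap, _, hbal⟩
      refine ⟨?_, ?_, ?_⟩
      · intro a ha
        by_cases h : a ∈ A'
        · have := hcap a h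
          simpa only [hFdef, if_pos h, Network.reduced] using this
        · simpa only [hFdef, if_neg h] using hfcap a ha
      · intro a ha
        have h : a ∉ A' := fun hmem => ha (Finset.mem_filter.1 hmem).1
        simp only [hFdef, if_neg h]
        exact hf0 a ha
      · intro i
        have hbi := hbal i
        have hredb : (N.reduced f y).b i = N.b i
            - ∑ a ∈ (N.A.filter fun a => N.redCost y a ≠ 0).filter (fun a => a.1 = i), f a
            + ∑ a ∈ (N.A.filter fun a => N.redCost y a ≠ 0).filter (fun a => a.2 = i), f a := rfl
        rw [hA', hredb] at hbi
        have e1 := hXA (fun a => a.1 = i)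
        have e2 := hXA (fun a => a.2 = i)
        rw [e1, e2]
        omega
    · rintro ⟨hcap, _, hbal⟩
      refine ⟨?_, ?_, ?_⟩
      · intro a ha
        have haA : a ∈ N.A := (Finset.mem_filter.1 ha).1
        have := hcap a haA
        simpa only [hFdef, if_pos (hA' ▸ ha), Network.reduced] using this
      · exact hf'0
      · intro i
        have hbi := hbal i
        have e1 := hXA (fun a => a.1 = i)
        have e2 := hXA (fun a => a.2 = i)
        rw [e1, e2] at hbi
        have hredb : (N.reduced f y).b i = N.b i
            - ∑ a ∈ (N.A.filter fun a => N.redCost y a ≠ 0).filter (fun a => a.1 = i), f a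
            + ∑ a ∈ (N.A.filter fun a => N.redCost y a ≠ 0).filter (fun a => a.2 = i), f a := rfl
        rw [hA', hredb]
        omega
  -- optimality given feasibility
  have hopt : N.Feasible F → N.Optimal F := by
    intro hFfeas
    refine ⟨hFfeas, fun g hg => ?_⟩
    rw [costeq F hFfeas, costeq g hg]
    have hle : ∑ a ∈ N.A, N.redCost y a * (F a : ℝ)
        ≤ ∑ a ∈ N.A, N.redCost y a * (g a : ℝ) := by
      refine Finset.sum_le_sum fun a ha => ?_
      by_cases h : a ∈ A'
      · have h0 : N.redCost y a = 0 := (Finset.mem_filter.1 h).2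
        rw [h0]; simp
      · have hFa : F a = f a := by simp only [hFdef, if_neg h]
        rw [hFa]
        rcases lt_trichotomy (N.redCost y a) 0 with hlt | heq | hgt
        · have hfu : f a = N.u a := cs2 a ha hlt
          have : (g a : ℝ) ≤ (f a : ℝ) := by
            rw [hfu]; exact_mod_cast (hg.1 a ha).2
          nlinarith
        · rw [heq]; simp
        · have hfl : f a = N.l a := cs1 a ha hgt
          have : (f a : ℝ) ≤ (g a : ℝ) := by
            rw [hfl]; exact_mod_cast (hg.1 a ha).1
          nlinarith
    linarith
  constructor
  · intro h
    exact hopt (hfeas_iff.1 h)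
  · intro h
    exact hfeas_iff.2 h.1
end
end

section
/- Let f be a feasible integer flow of a network. There exists a feasible integer flow f' with f' ≠ f if and only if the residual graph D_f contains a proper directed cycle. -/
open scoped Classical
noncomputable section

variable {V : Type} [Fintype V] [DecidableEq V]

section AuxCyc

variable {V : Type} [Fintype V] [DecidableEq V]

lemma zip_rotate_nodup (l : List V) (h : l.Nodup) : (l.zip (l.rotate 1)).Nodup := by
  have hfst : (l.zip (l.rotate 1)).map Prod.fst = l := List.map_fst_zip (by simp)
  exact List.Nodup.of_map Prod.fst (by rw [hfst]; exact h)

lemma card_filter_toFinset (l : List (V × V)) (hl : l.Nodup) (p : V × V → Prop)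
    [DecidablePred p] :
    (l.toFinset.filter p).card = l.countP (fun a => decide (p a)) := by
  classical
  have h1 : l.toFinset.filter p = (l.filter (fun a => decide (p a))).toFinset := by
    ext a; simp
  rw [h1, List.card_toFinset, (hl.filter _).dedup, List.countP_eq_length_filter]

lemma count_nodup (l : List V) (hl : l.Nodup) (i : V) :
    l.countP (fun x => decide (x = i)) = if i ∈ l then 1 else 0 := by
  have h : l.countP (fun x => decide (x = i)) = l.count i := by
    rw [List.count]; congr 1
  rw [h]
  by_cases hi : i ∈ l
  · simp [hi, List.count_eq_one_of_mem hl hi]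
  · simp [hi, List.count_eq_zero_of_not_mem hi]

lemma Cyc.card_arcs_fst (C : Cyc V) (i : V) :
    (C.arcs.filter fun a => a.1 = i).card = if i ∈ C.verts then 1 else 0 := by
  classical
  have hn := zip_rotate_nodup C.verts C.nodup
  have hfst : (C.verts.zip (C.verts.rotate 1)).map Prod.fst = C.verts :=
    List.map_fst_zip (by simp)
  rw [Cyc.arcs, card_filter_toFinset _ hn]
  have h2 : (C.verts.zip (C.verts.rotate 1)).countP (fun a => decide (a.1 = i))
      = C.verts.countP (fun x => decide (x = i)) := by
    conv_rhs => rw [← hfst]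
    rw [List.countP_map]; rfl
  rw [h2, count_nodup _ C.nodup]

lemma Cyc.card_arcs_snd (C : Cyc V) (i : V) :
    (C.arcs.filter fun a => a.2 = i).card = if i ∈ C.verts then 1 else 0 := by
  classical
  have hn := zip_rotate_nodup C.verts C.nodup
  have hsnd : (C.verts.zip (C.verts.rotate 1)).map Prod.snd = C.verts.rotate 1 :=
    List.map_snd_zip (by simp)
  rw [Cyc.arcs, card_filter_toFinset _ hn]
  have h2 : (C.verts.zip (C.verts.rotate 1)).countP (fun a => decide (a.2 = i))
      = (C.verts.rotate 1).countP (fun x => decide (x = i)) := by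
    conv_rhs => rw [← hsnd]
    rw [List.countP_map]; rfl
  rw [h2, count_nodup _ (List.nodup_rotate.2 C.nodup)]
  simp [List.mem_rotate]

lemma Cyc.arcs_nonempty (C : Cyc V) : C.arcs.Nonempty := by
  have h2 : 0 < (C.verts.zip (C.verts.rotate 1)).length := by
    have := C.two_le
    simp only [List.length_zip, List.length_rotate]
    omega
  rcases hl : (C.verts.zip (C.verts.rotate 1)) with _ | ⟨a, t⟩
  · rw [hl] at h2; simp at h2
  · exact ⟨a, by simp [Cyc.arcs, hl]⟩

lemma mem_zip_rotate {l : List V} {a : V × V} (h : a ∈ l.zip (l.rotate 1)) :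
    ∃ k : ℕ, ∃ hk : k < l.length,
      l[k] = a.1 ∧ l[(k+1) % l.length]'(Nat.mod_lt _ (by omega)) = a.2 := by
  obtain ⟨k, hk, he⟩ := List.mem_iff_getElem.1 h
  have hk' : k < l.length := by simpa using (lt_of_lt_of_le hk (by simp))
  refine ⟨k, hk', ?_, ?_⟩
  · rw [← he]; exact (List.getElem_zip (i := k)).symm ▸ rfl
  · rw [← he]
    have h1 : (l.zip (l.rotate 1))[k] =
        (l[k]'(by simpa using hk'), (l.rotate 1)[k]'(by simpa using hk')) :=
      List.getElem_zip
    rw [h1, List.getElem_rotate]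

lemma exists_cycle (H : Finset (V × V)) (hne : H.Nonempty)
    (hloop : ∀ a ∈ H, a.1 ≠ a.2) (hsucc : ∀ a ∈ H, ∃ b ∈ H, b.1 = a.2) :
    ∃ C : Cyc V, ∀ a ∈ C.arcs, a ∈ H := by
  classical
  obtain ⟨a0, ha0⟩ := hne
  set next : V → V := fun i => if h : ∃ b ∈ H, b.1 = i then
      ((Classical.choose h).1, (Classical.choose h).2).2 else i with hnextdef
  have hnext : ∀ i, (∃ b ∈ H, b.1 = i) → (i, next i) ∈ H := by
    intro i h
    obtain ⟨hb, he⟩ := Classical.choose_spec h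
    have : (i, next i) = Classical.choose h := by
      simp only [hnextdef, dif_pos h]
      exact Prod.ext he.symm rfl
    rw [this]; exact hb
  set seq : ℕ → V := fun n => next^[n] a0.1 with hseqdef
  have hgood : ∀ n, ∃ b ∈ H, b.1 = seq n := by
    intro n
    induction n with
    | zero => exact ⟨a0, ha0, rfl⟩
    | succ n ih =>
      have harc := hnext _ ih
      obtain ⟨b, hb, he⟩ := hsucc _ harc
      refine ⟨b, hb, ?_⟩
      simp only [hseqdef, Function.iterate_succ_apply']
      exact he
  have hstep : ∀ n, (seq n, seq (n+1)) ∈ H := by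
    intro n
    have : seq (n+1) = next (seq n) := by
      simp only [hseqdef, Function.iterate_succ_apply']
    rw [this]; exact hnext _ (hgood n)
  have hP : ∃ n, ∃ m, m < n ∧ seq m = seq n := by
    obtain ⟨x, y, hxy, he⟩ := Finite.exists_ne_map_eq_of_infinite seq
    rcases lt_or_gt_of_ne hxy with h | h
    · exact ⟨y, x, h, he⟩
    · exact ⟨x, y, h, he.symm⟩
  set n0 := Nat.find hP with hn0def
  obtain ⟨m, hmn, heq⟩ := Nat.find_spec hP
  have hmin : ∀ k < n0, ¬ ∃ m', m' < k ∧ seq m' = seq k := fun k hk => Nat.find_min hP hk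
  have hne' : ∀ n, seq n ≠ seq (n+1) := fun n => hloop _ (hstep n)
  have h2 : 2 ≤ n0 - m := by
    rcases Nat.lt_or_ge (n0 - m) 2 with h | h
    · exfalso
      interval_cases h' : (n0 - m)
      · omega
      · have : n0 = m + 1 := by omega
        exact hne' m (by rw [← this]; exact heq)
    · exact h
  refine ⟨⟨(List.range (n0 - m)).map (fun k => seq (m + k)), ?_, by simpa using h2⟩, ?_⟩
  · refine List.Nodup.map_on ?_ List.nodup_range
    intro x hx y hy hxy
    simp only [List.mem_range] at hx hy
    by_contra hne2
    rcases lt_or_gt_of_ne hne2 with h | h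
    · exact hmin (m + y) (by omega) ⟨m + x, by omega, hxy⟩
    · exact hmin (m + x) (by omega) ⟨m + y, by omega, hxy.symm⟩
  · intro a ha
    rw [Cyc.arcs, List.mem_toFinset] at ha
    obtain ⟨k, hk, h1, h2'⟩ := mem_zip_rotate ha
    simp only [List.length_map, List.length_range] at hk
    have hk2 : (k+1) % (n0 - m) < n0 - m := Nat.mod_lt _ (by omega)
    have e1 : a.1 = seq (m + k) := by
      rw [← h1]; simp [hk]
    have e2 : a.2 = seq (m + (k+1) % (n0 - m)) := by
      rw [← h2']; simp [hk2]
    have ha' : a = (seq (m + k), seq (m + (k+1) % (n0 - m))) := Prod.ext e1 e2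
    rw [ha']
    rcases Nat.lt_or_ge (k+1) (n0 - m) with h | h
    · have hmod : (k+1) % (n0-m) = k+1 := Nat.mod_eq_of_lt h
      rw [hmod, show m + (k+1) = (m+k) + 1 by omega]
      exact hstep (m+k)
    · have hk1 : k + 1 = n0 - m := by omega
      have hmod : (k+1) % (n0-m) = 0 := by rw [hk1]; simp
      have e5 : seq (m + (k+1) % (n0-m)) = seq ((m+k)+1) := by
        rw [hmod, Nat.add_zero, heq]; congr 1; omega
      rw [e5]
      exact hstep (m+k)

lemma mem_image_swap (S : Finset (V × V)) (a : V × V) :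
    a ∈ S.image Prod.swap ↔ (a.2, a.1) ∈ S := by
  constructor
  · rintro h
    obtain ⟨b, hb, he⟩ := Finset.mem_image.1 h
    have : (a.2, a.1) = b := by rw [← he]; rfl
    rw [this]; exact hb
  · intro h
    exact Finset.mem_image.2 ⟨(a.2, a.1), h, rfl⟩

lemma Network.mem_resArcs (N : Network V) (f : V × V → ℤ) (a : V × V) :
    a ∈ N.resArcs f ↔ (a ∈ N.A ∧ f a < N.u a) ∨
      ((a.2, a.1) ∈ N.A ∧ N.l (a.2, a.1) < f (a.2, a.1)) := by
  rw [Network.resArcs, Finset.mem_union, mem_image_swap, Finset.mem_filter, Finset.mem_filter]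

end AuxCyc

/-- A feasible integer flow `f'` different from `f` exists iff the residual graph `D_f`
contains a proper directed cycle. -/
theorem exists_other_feasible_iff_proper_cycle (N : Network V) (hN : N.Wellformed)
    (f : V × V → ℤ) (hf : N.Feasible f) :
    (∃ f' : V × V → ℤ, N.Feasible f' ∧ f' ≠ f) ↔
      ∃ C : Cyc V, N.IsResCycle f C ∧ C.Proper := by
  classical
  constructor
  · rintro ⟨f', hf', hne⟩
    set H : Finset (V × V) := (N.A.filter fun a => f a < f' a) ∪
      ((N.A.filter fun a => f' a < f a).image Prod.swap) with hHdef
    have hHmem : ∀ a, a ∈ H ↔ (a ∈ N.A ∧ f a < f' a) ∨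
        ((a.2, a.1) ∈ N.A ∧ f' (a.2, a.1) < f (a.2, a.1)) := by
      intro a
      rw [hHdef, Finset.mem_union, mem_image_swap, Finset.mem_filter, Finset.mem_filter]
    have hH_anti : ∀ a ∈ H, (a.2, a.1) ∉ H := by
      intro a ha hb
      rw [hHmem] at ha hb
      rcases ha with ⟨h1, h2⟩ | ⟨h1, h2⟩ <;> rcases hb with ⟨h3, h4⟩ | ⟨h3, h4⟩
      · exact hN.1 a h1 h3
      · have h4' : f' a < f a := by simpa using h4
        omega
      · omega
      · exact hN.1 _ h1 h3
    have hH_res : ∀ a ∈ H, a ∈ N.resArcs f := by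
      intro a ha
      rw [hHmem] at ha
      rw [Network.mem_resArcs]
      rcases ha with ⟨h1, h2⟩ | ⟨h1, h2⟩
      · exact Or.inl ⟨h1, lt_of_lt_of_le h2 ((hf'.1 a h1).2)⟩
      · exact Or.inr ⟨h1, lt_of_le_of_lt ((hf'.1 _ h1).1) h2⟩
    have hH_loop : ∀ a ∈ H, a.1 ≠ a.2 := by
      intro a ha hdiag
      have hswap : (a.2, a.1) = a := Prod.ext hdiag.symm hdiag
      exact hH_anti a ha (by rw [hswap]; exact ha)
    have hH_ne : H.Nonempty := by
      obtain ⟨a, hd⟩ := Function.ne_iff.1 hne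
      have haA : a ∈ N.A := by
        by_contra hx
        exact hd (by rw [hf'.2.1 a hx, hf.2.1 a hx])
      rcases lt_or_gt_of_ne hd with h | h
      · exact ⟨(a.2, a.1), (hHmem _).2 (Or.inr ⟨haA, h⟩)⟩
      · exact ⟨a, (hHmem _).2 (Or.inl ⟨haA, h⟩)⟩
    have hcons : ∀ i : V, (∑ a ∈ N.A.filter fun a => a.1 = i, (f' a - f a))
        = ∑ a ∈ N.A.filter fun a => a.2 = i, (f' a - f a) := by
      intro i
      have h1 := hf.2.2 i
      have h2 := hf'.2.2 i
      rw [Finset.sum_sub_distrib, Finset.sum_sub_distrib]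
      omega
    have hH_succ : ∀ a ∈ H, ∃ b ∈ H, b.1 = a.2 := by
      intro a ha
      by_contra hno
      push_neg at hno
      set i := a.2 with hidef
      have hout : ∀ c ∈ N.A.filter fun c => c.1 = i, f' c - f c ≤ 0 := by
        intro c hc
        rw [Finset.mem_filter] at hc
        by_contra hx
        exact hno c ((hHmem _).2 (Or.inl ⟨hc.1, by omega⟩)) hc.2
      have hin : ∀ c ∈ N.A.filter fun c => c.2 = i, 0 ≤ f' c - f c := by
        intro c hc
        rw [Finset.mem_filter] at hc
        by_contra hx
        refine hno (c.2, c.1) ((hHmem _).2 (Or.inr ⟨by simpa using hc.1, by simp; omega⟩)) ?_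
        simpa using hc.2
      have hle : (∑ c ∈ N.A.filter fun c => c.1 = i, (f' c - f c)) ≤ 0 :=
        Finset.sum_nonpos hout
      have hge : (0:ℤ) ≤ ∑ c ∈ N.A.filter fun c => c.2 = i, (f' c - f c) :=
        Finset.sum_nonneg hin
      have hz1 : (∑ c ∈ N.A.filter fun c => c.1 = i, (f' c - f c)) = 0 := by
        have := hcons i; omega
      have hz2 : (∑ c ∈ N.A.filter fun c => c.2 = i, (f' c - f c)) = 0 := by
        have := hcons i; omega
      have hall1 := (Finset.sum_eq_zero_iff_of_nonpos hout).1 hz1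
      have hall2 := (Finset.sum_eq_zero_iff_of_nonneg hin).1 hz2
      rw [hHmem] at ha
      rcases ha with ⟨h1, h2⟩ | ⟨h1, h2⟩
      · have := hall2 a (Finset.mem_filter.2 ⟨h1, rfl⟩)
        omega
      · have := hall1 (a.2, a.1) (Finset.mem_filter.2 ⟨h1, rfl⟩)
        omega
    obtain ⟨C, hC⟩ := exists_cycle H hH_ne hH_loop hH_succ
    exact ⟨C, fun a ha => hH_res a (hC a ha),
      fun a ha hb => hH_anti a (hC a ha) (hC _ hb)⟩
  · rintro ⟨C, hCres, hCprop⟩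
    set g : V × V → ℤ := fun a => f a + N.chi C a with hgdef
    have hchival : ∀ a ∈ N.A, N.chi C a
        = (if a ∈ C.arcs then (1:ℤ) else 0) - (if (a.2, a.1) ∈ C.arcs then 1 else 0) := by
      intro a ha
      rw [Network.chi, if_pos ha, Cyc.chi]
      by_cases h1 : a ∈ C.arcs
      · rw [if_pos h1, if_pos h1, if_neg (hCprop a h1)]; ring
      · by_cases h2 : (a.2, a.1) ∈ C.arcs
        · rw [if_neg h1, if_pos h2, if_neg h1, if_pos h2]; ring
        · rw [if_neg h1, if_neg h2, if_neg h1, if_neg h2]; ring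
    have hcap : ∀ a ∈ N.A, N.l a ≤ g a ∧ g a ≤ N.u a := by
      intro a ha
      have hsw : (a.2, a.1) ∉ N.A := hN.1 a ha
      have hlu := hN.2 a ha
      have hc := hf.1 a ha
      simp only [hgdef]
      rw [Network.chi, if_pos ha, Cyc.chi]
      by_cases h1 : a ∈ C.arcs
      · have hr := (N.mem_resArcs f a).1 (hCres a h1)
        have hfu : f a < N.u a := by
          rcases hr with ⟨_, h⟩ | ⟨h, _⟩
          · exact h
          · exact absurd h hsw
        rw [if_pos h1]; omega
      · by_cases h2 : (a.2, a.1) ∈ C.arcs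
        · have hr := (N.mem_resArcs f _).1 (hCres _ h2)
          have hlf : N.l a < f a := by
            rcases hr with ⟨h, _⟩ | ⟨h3, h4⟩
            · exact absurd h hsw
            · simpa using h4
          rw [if_neg h1, if_pos h2]; omega
        · rw [if_neg h1, if_neg h2]; omega
    have hvan : ∀ a, a ∉ N.A → g a = 0 := by
      intro a ha
      simp only [hgdef]
      rw [Network.chi, if_neg ha, hf.2.1 a ha]; ring
    have hkey1 : ∀ i : V, (∑ a ∈ N.A.filter fun a => a.1 = i, N.chi C a)
        = ((C.arcs.filter fun a => a ∈ N.A ∧ a.1 = i).card : ℤ)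
          - ((C.arcs.filter fun a => a ∉ N.A ∧ a.2 = i).card : ℤ) := by
      intro i
      rw [Finset.sum_congr rfl (fun a ha => hchival a (Finset.mem_filter.1 ha).1),
        Finset.sum_sub_distrib]
      congr 1
      · rw [Finset.sum_boole]
        congr 1
        have he : (N.A.filter fun a => a.1 = i).filter (fun a => a ∈ C.arcs)
            = C.arcs.filter (fun a => a ∈ N.A ∧ a.1 = i) := by
          ext a
          simp only [Finset.mem_filter]
          tauto
        rw [he]
      · rw [Finset.sum_boole]
        congr 1
        have he : (N.A.filter fun a => a.1 = i).filter (fun a => (a.2, a.1) ∈ C.arcs)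
            = (C.arcs.filter fun a => a ∉ N.A ∧ a.2 = i).image Prod.swap := by
          ext a
          rw [mem_image_swap, Finset.mem_filter, Finset.mem_filter, Finset.mem_filter]
          constructor
          · rintro ⟨⟨hA, hi⟩, hS⟩
            exact ⟨hS, hN.1 a hA, hi⟩
          · rintro ⟨hS, hnA, hi⟩
            refine ⟨⟨?_, hi⟩, hS⟩
            have hr := (N.mem_resArcs f _).1 (hCres _ hS)
            rcases hr with ⟨h, _⟩ | ⟨h, _⟩
            · exact absurd h hnA
            · simpa using h
        rw [he, Finset.card_image_of_injective _ Prod.swap_injective]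
    have hkey2 : ∀ i : V, (∑ a ∈ N.A.filter fun a => a.2 = i, N.chi C a)
        = ((C.arcs.filter fun a => a ∈ N.A ∧ a.2 = i).card : ℤ)
          - ((C.arcs.filter fun a => a ∉ N.A ∧ a.1 = i).card : ℤ) := by
      intro i
      rw [Finset.sum_congr rfl (fun a ha => hchival a (Finset.mem_filter.1 ha).1),
        Finset.sum_sub_distrib]
      congr 1
      · rw [Finset.sum_boole]
        congr 1
        have he : (N.A.filter fun a => a.2 = i).filter (fun a => a ∈ C.arcs)
            = C.arcs.filter (fun a => a ∈ N.A ∧ a.2 = i) := by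
          ext a
          simp only [Finset.mem_filter]
          tauto
        rw [he]
      · rw [Finset.sum_boole]
        congr 1
        have he : (N.A.filter fun a => a.2 = i).filter (fun a => (a.2, a.1) ∈ C.arcs)
            = (C.arcs.filter fun a => a ∉ N.A ∧ a.1 = i).image Prod.swap := by
          ext a
          rw [mem_image_swap, Finset.mem_filter, Finset.mem_filter, Finset.mem_filter]
          constructor
          · rintro ⟨⟨hA, hi⟩, hS⟩
            exact ⟨hS, hN.1 a hA, hi⟩
          · rintro ⟨hS, hnA, hi⟩
            refine ⟨⟨?_, hi⟩, hS⟩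
            have hr := (N.mem_resArcs f _).1 (hCres _ hS)
            rcases hr with ⟨h, _⟩ | ⟨h, _⟩
            · exact absurd h hnA
            · simpa using h
        rw [he, Finset.card_image_of_injective _ Prod.swap_injective]
    have hpart : ∀ (p : V × V → Prop) [DecidablePred p],
        (C.arcs.filter fun a => a ∈ N.A ∧ p a).card
          + (C.arcs.filter fun a => a ∉ N.A ∧ p a).card
          = (C.arcs.filter p).card := by
      intro p _
      have e1 : (C.arcs.filter fun a => a ∈ N.A ∧ p a)
          = (C.arcs.filter p).filter (fun a => a ∈ N.A) := by
        ext a; simp only [Finset.mem_filter]; tauto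
      have e2 : (C.arcs.filter fun a => a ∉ N.A ∧ p a)
          = (C.arcs.filter p).filter (fun a => a ∉ N.A) := by
        ext a; simp only [Finset.mem_filter]; tauto
      rw [e1, e2]
      exact Finset.card_filter_add_card_filter_not _
    have hdiv : ∀ i : V, (∑ a ∈ N.A.filter fun a => a.1 = i, N.chi C a)
        - (∑ a ∈ N.A.filter fun a => a.2 = i, N.chi C a) = 0 := by
      intro i
      rw [hkey1 i, hkey2 i]
      have p1 := hpart (fun a => a.1 = i)
      have p2 := hpart (fun a => a.2 = i)
      have c12 : (C.arcs.filter fun a => a.1 = i).card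
          = (C.arcs.filter fun a => a.2 = i).card := by
        rw [Cyc.card_arcs_fst, Cyc.card_arcs_snd]
      omega
    have hcons : ∀ i : V, ((∑ a ∈ N.A.filter fun a => a.1 = i, g a)
        - ∑ a ∈ N.A.filter fun a => a.2 = i, g a) = N.b i := by
      intro i
      simp only [hgdef]
      rw [Finset.sum_add_distrib, Finset.sum_add_distrib]
      have h1 := hf.2.2 i
      have h2 := hdiv i
      omega
    have hgne : g ≠ f := by
      obtain ⟨a, haS⟩ := C.arcs_nonempty
      have hr := (N.mem_resArcs f a).1 (hCres a haS)
      rcases hr with ⟨hA, _⟩ | ⟨hA, _⟩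
      · intro h
        have hc := congrFun h a
        simp only [hgdef] at hc
        rw [Network.chi, if_pos hA, Cyc.chi, if_pos haS] at hc
        omega
      · intro h
        have hc := congrFun h (a.2, a.1)
        simp only [hgdef] at hc
        rw [Network.chi, if_pos hA, Cyc.chi, if_neg (hCprop a haS),
          if_pos (show ((a.2,a.1).2,(a.2,a.1).1) ∈ C.arcs by simpa using haS)] at hc
        omega
    exact ⟨g, ⟨hcap, hvan, hcons⟩, hgne⟩
end
end

section
/- Let G be a finite directed graph equipped with a DFS forest (a spanning rooted forest with parent map π, preorder numbering dfs, whose tree arcs are arcs of G, and such that for every arc (i,j) of G either i and j are comparable in the ancestor order or dfs(j) < dfs(i)). If G contains a proper directed cycle, then G contains a proper backward cycle, a proper forward cycle, or a proper cross cycle with respect to this forest. -/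
open scoped Classical
noncomputable section

variable {V : Type} [Fintype V] [DecidableEq V]

/-- `Anc parent x y` : `x` is an ancestor of `y` in the rooted forest given by `parent`
(reflexively: every node is an ancestor of itself). -/
def Anc (parent : V → Option V) (x y : V) : Prop :=
  Relation.ReflTransGen (fun u v => parent u = some v) y x

/-- A DFS forest of the directed graph with arc set `E`: a spanning rooted forest (given by
the parent map) whose tree arcs are arcs of `E`, together with an injective preorder
numbering `dfs`, such that for every arc `(i,j)` of `E` either `i` and `j` are comparable
in the ancestor order or `dfs j < dfs i`. -/
structure DFSForest (V : Type) [Fintype V] [DecidableEq V] (E : Finset (V × V)) where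
  parent : V → Option V
  dfs : V → ℕ
  dfs_inj : Function.Injective dfs
  tree_arc_mem : ∀ i p, parent i = some p → (p, i) ∈ E
  dfs_parent_lt : ∀ i p, parent i = some p → dfs p < dfs i
  /-- preorder property: the dfs numbers of the subtree rooted at `v` form a consecutive
  interval starting at `dfs v`. -/
  preorder : ∀ v : V,
    (Finset.univ.filter fun u => Anc parent v u).image dfs
      = Finset.Ico (dfs v) (dfs v + (Finset.univ.filter fun u => Anc parent v u).card)
  arcs_comparable_or_lt : ∀ a ∈ E,
    Anc parent a.1 a.2 ∨ Anc parent a.2 a.1 ∨ dfs a.2 < dfs a.1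

namespace DFSForest

variable {E : Finset (V × V)}

/-- `(i,j)` is a tree arc: `i` is the parent of `j`. -/
def TreeArc (F : DFSForest V E) (a : V × V) : Prop := a ∈ E ∧ F.parent a.2 = some a.1

/-- `(i,j)` is a backward arc: `j` is a proper ancestor of `i`. -/
def BackwardArc (F : DFSForest V E) (a : V × V) : Prop :=
  a ∈ E ∧ Anc F.parent a.2 a.1 ∧ a.2 ≠ a.1

/-- A short backward arc: `(i, π i)`. -/
def ShortBackwardArc (F : DFSForest V E) (a : V × V) : Prop :=
  a ∈ E ∧ F.parent a.1 = some a.2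

/-- A long backward arc: a backward arc that is not short. -/
def LongBackwardArc (F : DFSForest V E) (a : V × V) : Prop :=
  F.BackwardArc a ∧ F.parent a.1 ≠ some a.2

/-- A forward arc: a non-tree arc `(i,j)` where `j` is a proper descendant of `i`. -/
def ForwardArc (F : DFSForest V E) (a : V × V) : Prop :=
  a ∈ E ∧ ¬ F.TreeArc a ∧ Anc F.parent a.1 a.2 ∧ a.1 ≠ a.2

/-- A cross arc: an arc whose endpoints are incomparable in the ancestor order. -/
def CrossArc (F : DFSForest V E) (a : V × V) : Prop :=
  a ∈ E ∧ ¬ Anc F.parent a.1 a.2 ∧ ¬ Anc F.parent a.2 a.1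

/-- The tree arcs of the unique tree path from an ancestor `j` down to `i`. -/
def treePathArcs (F : DFSForest V E) (j i : V) : Finset (V × V) :=
  Finset.univ.filter fun a =>
    F.parent a.2 = some a.1 ∧ Anc F.parent j a.2 ∧ Anc F.parent a.2 i ∧ a.2 ≠ j

/-- `a` is the lowest common ancestor of `i` and `j`. -/
def IsLCA (F : DFSForest V E) (a i j : V) : Prop :=
  Anc F.parent a i ∧ Anc F.parent a j ∧
    ∀ b, Anc F.parent b i → Anc F.parent b j → Anc F.parent b a

/-- A proper backward cycle: a proper cycle formed by a long backward arc `(i,j)` together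
with the unique tree path from `j` to `i`. -/
def ProperBackwardCycle (F : DFSForest V E) (C : Cyc V) : Prop :=
  C.Proper ∧ ∃ i j : V, F.LongBackwardArc (i, j) ∧
    C.arcs = insert (i, j) (F.treePathArcs j i)

/-- A proper forward cycle: a proper cycle formed by a forward arc `(i,j)` together with a
path from `j` to `i` consisting only of short backward arcs. -/
def ProperForwardCycle (F : DFSForest V E) (C : Cyc V) : Prop :=
  C.Proper ∧ ∃ (i j : V) (S : Finset (V × V)), F.ForwardArc (i, j) ∧
    (∀ e ∈ S, F.ShortBackwardArc e) ∧ C.arcs = insert (i, j) S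

/-- A proper cross cycle: a proper cycle formed by a cross arc `(i,j)`, a path from `j` to
the lowest common ancestor `a` of `i` and `j` consisting only of short backward arcs, and
the tree path from `a` to `i`. -/
def ProperCrossCycle (F : DFSForest V E) (C : Cyc V) : Prop :=
  C.Proper ∧ ∃ (i j a : V) (S : Finset (V × V)), F.CrossArc (i, j) ∧ F.IsLCA a i j ∧
    (∀ e ∈ S, F.ShortBackwardArc e) ∧
    C.arcs = insert (i, j) (S ∪ F.treePathArcs a i)

end DFSForest

set_option linter.unusedSectionVars false


/-- consecutive pairs of a list -/
def pairs {α : Type*} (l : List α) : List (α × α) := l.zip l.tail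

@[simp] lemma pairs_nil {α : Type*} : pairs ([] : List α) = [] := rfl
@[simp] lemma pairs_singleton {α : Type*} (a : α) : pairs [a] = [] := rfl
@[simp] lemma pairs_cons_cons {α : Type*} (a b : α) (l : List α) :
    pairs (a :: b :: l) = (a, b) :: pairs (b :: l) := rfl

lemma pairs_append {α : Type*} (l1 l2 : List α) (h1 : l1 ≠ []) (h2 : l2 ≠ []) :
    pairs (l1 ++ l2) = pairs l1 ++ (l1.getLast h1, l2.head h2) :: pairs l2 := by
  induction l1 with
  | nil => exact absurd rfl h1
  | cons a t ih =>
    cases t with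
    | nil =>
      cases l2 with
      | nil => exact absurd rfl h2
      | cons b s => simp [pairs]
    | cons b s =>
      have ht : (b :: s : List α) ≠ [] := by simp
      have e1 : ((a :: b :: s) ++ l2) = a :: b :: (s ++ l2) := by simp
      have e2 : (b :: (s ++ l2)) = (b :: s) ++ l2 := by simp
      rw [e1, pairs_cons_cons, e2, ih ht, List.getLast_cons_cons]
      simp

lemma mem_pairs_cons {α : Type*} {u v a b : α} {l : List α} :
    (u, v) ∈ pairs (a :: b :: l) ↔ (u = a ∧ v = b) ∨ (u, v) ∈ pairs (b :: l) := by
  rw [pairs_cons_cons]; simp [Prod.ext_iff]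

lemma pairs_ne_of_nodup {α : Type*} {u v : α} : ∀ {l : List α}, l.Nodup →
    (u, v) ∈ pairs l → u ≠ v := by
  intro l
  induction l with
  | nil => intro _ h; simp at h
  | cons a t ih =>
    intro hnd hm
    cases t with
    | nil => simp at hm
    | cons b s =>
      rcases mem_pairs_cons.1 hm with ⟨rfl, rfl⟩ | hm'
      · intro h; rw [h] at hnd; simp at hnd
      · exact ih hnd.of_cons hm'

lemma fst_mem_of_mem_pairs {α : Type*} {u v : α} {l : List α} (h : (u, v) ∈ pairs l) :
    u ∈ l := (List.of_mem_zip h).1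

lemma snd_mem_of_mem_pairs {α : Type*} {u v : α} {l : List α} (h : (u, v) ∈ pairs l) :
    v ∈ l := List.mem_of_mem_tail (List.of_mem_zip h).2


lemma mem_pairs_reverse {α : Type*} {u v : α} : ∀ {l : List α},
    ((u, v) ∈ pairs l.reverse ↔ (v, u) ∈ pairs l) := by
  intro l
  induction l with
  | nil => simp
  | cons a t ih =>
    by_cases ht : t = []
    · subst ht; simp
    have hrt : t.reverse ≠ [] := by simpa using ht
    have e : (a :: t).reverse = t.reverse ++ [a] := by simp
    rw [e, pairs_append t.reverse [a] hrt (by simp)]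
    have hlast : t.reverse.getLast hrt = t.head ht := by
      rw [List.getLast_reverse]
    rw [hlast]
    cases t with
    | nil => exact absurd rfl ht
    | cons b s =>
      rw [List.head_cons]
      constructor
      · intro hm
        rcases List.mem_append.1 hm with hm | hm
        · exact mem_pairs_cons.2 (Or.inr (ih.1 hm))
        · simp only [pairs_singleton, List.mem_cons, List.not_mem_nil, or_false,
            Prod.ext_iff] at hm
          exact mem_pairs_cons.2 (Or.inl ⟨hm.2, hm.1⟩)
      · intro hm
        rcases mem_pairs_cons.1 hm with ⟨rfl, rfl⟩ | hm
        · exact List.mem_append.2 (Or.inr (by simp))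
        · exact List.mem_append.2 (Or.inl (ih.2 hm))

lemma zip_append_singleton {α : Type*} : ∀ (t : List α) (a c : α),
    (a :: t).zip (t ++ [c]) = pairs (a :: t) ++ [((a :: t).getLast (by simp), c)] := by
  intro t
  induction t with
  | nil => intro a c; simp [pairs]
  | cons b s ih =>
    intro a c
    have e1 : (a :: b :: s).zip ((b :: s) ++ [c]) = (a, b) :: ((b :: s).zip (s ++ [c])) := by
      simp
    rw [e1, ih b c, List.getLast_cons_cons]
    simp

lemma zip_rotate_eq {α : Type*} (l : List α) (h : l ≠ []) :
    l.zip (l.rotate 1) = pairs l ++ [(l.getLast h, l.head h)] := by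
  cases l with
  | nil => exact absurd rfl h
  | cons a t =>
    rw [List.rotate_cons_succ, List.rotate_zero, zip_append_singleton t a a]
    simp

section AncLemmas

variable {pr : V → Option V}

lemma anc_refl (x : V) : Anc pr x x := Relation.ReflTransGen.refl

lemma anc_step {x y : V} (h : pr y = some x) : Anc pr x y := Relation.ReflTransGen.single h

lemma anc_trans {x y z : V} (hxy : Anc pr x y) (hzx : Anc pr z x) : Anc pr z y :=
  Relation.ReflTransGen.trans hxy hzx

lemma anc_first_step {x y : V} (h : Anc pr x y) (hne : x ≠ y) :
    ∃ p, pr y = some p ∧ Anc pr x p := by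
  rcases Relation.ReflTransGen.cases_head h with h' | ⟨b, hb, hbx⟩
  · exact absurd h'.symm hne
  · exact ⟨b, hb, hbx⟩

lemma anc_total {b c v : V} (hb : Anc pr b v) : Anc pr c v → Anc pr b c ∨ Anc pr c b := by
  induction hb using Relation.ReflTransGen.head_induction_on with
  | refl => intro hc; exact Or.inr hc
  | head hstep htail ih =>
    intro hc
    rcases Relation.ReflTransGen.cases_head hc with h' | ⟨d, hd, hdc⟩
    · subst h'
      exact Or.inl (htail.head hstep)
    · have : d = _ := Option.some.inj (hd.symm.trans hstep)
      subst this
      exact ih hdc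

end AncLemmas

namespace DFSForest

variable {E : Finset (V × V)} (F : DFSForest V E)

lemma dfs_le_of_anc {x y : V} (h : Anc F.parent x y) : F.dfs x ≤ F.dfs y := by
  induction h with
  | refl => exact le_rfl
  | tail _ h2 ih => exact le_trans (le_of_lt (F.dfs_parent_lt _ _ h2)) ih

lemma anc_antisymm {x y : V} (h1 : Anc F.parent x y) (h2 : Anc F.parent y x) : x = y :=
  F.dfs_inj (le_antisymm (F.dfs_le_of_anc h1) (F.dfs_le_of_anc h2))

lemma dfs_lt_of_anc {x y : V} (h : Anc F.parent x y) (hne : x ≠ y) : F.dfs x < F.dfs y :=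
  lt_of_le_of_ne (F.dfs_le_of_anc h) (fun e => hne (F.dfs_inj e))

/-- the subtree rooted at `v` -/
def sub (v : V) : Finset V := Finset.univ.filter fun u => Anc F.parent v u

lemma mem_sub {v u : V} : u ∈ F.sub v ↔ Anc F.parent v u := by
  simp [sub]

/-- one past the end of the dfs interval of the subtree of `v` -/
def psi (v : V) : ℕ := F.dfs v + (F.sub v).card

lemma preorder' (v : V) : (F.sub v).image F.dfs = Finset.Ico (F.dfs v) (F.psi v) :=
  F.preorder v

lemma dfs_lt_psi (v : V) : F.dfs v < F.psi v := by
  have : v ∈ F.sub v := F.mem_sub.2 (anc_refl v)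
  have : 0 < (F.sub v).card := Finset.card_pos.2 ⟨v, this⟩
  simp only [psi]; omega

lemma dfs_mem_Ico_of_anc {x y : V} (h : Anc F.parent x y) :
    F.dfs y ∈ Finset.Ico (F.dfs x) (F.psi x) := by
  rw [← F.preorder']
  exact Finset.mem_image_of_mem _ (F.mem_sub.2 h)

lemma psi_le_of_anc {x y : V} (h : Anc F.parent x y) : F.psi y ≤ F.psi x := by
  have hsub : F.sub y ⊆ F.sub x := by
    intro u hu
    exact F.mem_sub.2 (anc_trans (F.mem_sub.1 hu) h)
  have himg := Finset.image_subset_image (f := F.dfs) hsub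
  rw [F.preorder', F.preorder'] at himg
  exact ((Finset.Ico_subset_Ico_iff (F.dfs_lt_psi y)).1 himg).2

lemma sub_disjoint {x y : V} (hxy : ¬ Anc F.parent x y) (hyx : ¬ Anc F.parent y x) :
    Disjoint (F.sub x) (F.sub y) := by
  rw [Finset.disjoint_left]
  intro u hux huy
  rcases anc_total (F.mem_sub.1 hux) (F.mem_sub.1 huy) with h | h
  · exact hxy h
  · exact hyx h

lemma psi_le_dfs_of_incomp {x y : V} (hxy : ¬ Anc F.parent x y) (hyx : ¬ Anc F.parent y x)
    (hlt : F.dfs y < F.dfs x) : F.psi y ≤ F.dfs x := by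
  by_contra hcon
  push_neg at hcon
  have hdisj := F.sub_disjoint hxy hyx
  have himg : Disjoint ((F.sub x).image F.dfs) ((F.sub y).image F.dfs) :=
    (Finset.disjoint_image F.dfs_inj).2 hdisj
  rw [F.preorder', F.preorder'] at himg
  have h1 : F.dfs x ∈ Finset.Ico (F.dfs x) (F.psi x) :=
    Finset.mem_Ico.2 ⟨le_rfl, F.dfs_lt_psi x⟩
  have h2 : F.dfs x ∈ Finset.Ico (F.dfs y) (F.psi y) :=
    Finset.mem_Ico.2 ⟨le_of_lt hlt, hcon⟩
  exact (Finset.disjoint_left.1 himg h1) h2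

end DFSForest

/-- the list `i, parent i, …, j` (fuel-based) -/
def upTo (pr : V → Option V) (j : V) : ℕ → V → List V
  | 0, i => [i]
  | n+1, i =>
    if i = j then [i]
    else match pr i with
      | none => [i]
      | some p => i :: upTo pr j n p

lemma upTo_zero (pr : V → Option V) (j i : V) : upTo pr j 0 i = [i] := rfl

lemma upTo_self (pr : V → Option V) (j : V) (n : ℕ) : upTo pr j n j = [j] := by
  cases n <;> simp [upTo]

lemma upTo_succ_of (pr : V → Option V) {j i p : V} (hne : i ≠ j) (hp : pr i = some p)
    (n : ℕ) : upTo pr j (n+1) i = i :: upTo pr j n p := by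
  simp only [upTo, if_neg hne, hp]

namespace DFSForest

variable {E : Finset (V × V)} (F : DFSForest V E)

lemma spec_single (j : V) :
    ([j] : List V).head? = some j ∧ ([j] : List V).getLast? = some j ∧
    (∀ w, w ∈ ([j] : List V) ↔ (Anc F.parent w j ∧ Anc F.parent j w)) ∧
    (∀ u v, (u, v) ∈ pairs ([j] : List V) ↔
      (F.parent u = some v ∧ Anc F.parent u j ∧ Anc F.parent j u ∧ u ≠ j)) ∧
    ([j] : List V).Pairwise (fun a b => F.dfs b < F.dfs a) := by
  refine ⟨rfl, rfl, ?_, ?_, by simp⟩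
  · intro w
    simp only [List.mem_singleton]
    constructor
    · rintro rfl; exact ⟨anc_refl _, anc_refl _⟩
    · rintro ⟨h1, h2⟩; exact F.anc_antisymm h1 h2
  · intro u v
    simp only [pairs_singleton, List.not_mem_nil, false_iff]
    rintro ⟨_, h2, h3, h4⟩
    exact h4 (F.anc_antisymm h2 h3)

lemma upTo_spec {j : V} : ∀ (n : ℕ) {i : V}, Anc F.parent j i → F.dfs i ≤ F.dfs j + n →
    (upTo F.parent j n i).head? = some i ∧
    (upTo F.parent j n i).getLast? = some j ∧
    (∀ w, w ∈ upTo F.parent j n i ↔ (Anc F.parent w i ∧ Anc F.parent j w)) ∧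
    (∀ u v, (u, v) ∈ pairs (upTo F.parent j n i) ↔
      (F.parent u = some v ∧ Anc F.parent u i ∧ Anc F.parent j u ∧ u ≠ j)) ∧
    (upTo F.parent j n i).Pairwise (fun a b => F.dfs b < F.dfs a) := by
  intro n
  induction n with
  | zero =>
    intro i hanc hle
    obtain rfl : i = j :=
      F.dfs_inj (le_antisymm (by simpa using hle) (F.dfs_le_of_anc hanc))
    rw [upTo_zero]
    exact F.spec_single _
  | succ n ih =>
    intro i hanc hle
    by_cases hij : i = j
    · subst hij
      rw [upTo_self]
      exact F.spec_single i
    obtain ⟨p, hp, hjp⟩ := anc_first_step hanc (fun h => hij h.symm)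
    have hplt : F.dfs p < F.dfs i := F.dfs_parent_lt i p hp
    have hple : F.dfs p ≤ F.dfs j + n := by omega
    obtain ⟨ihh, ihl, ihm, ihp, ihpw⟩ := ih hjp hple
    rw [upTo_succ_of F.parent hij hp]
    obtain ⟨t, hLt⟩ : ∃ t, upTo F.parent j n p = p :: t := by
      cases hLc : upTo F.parent j n p with
      | nil => rw [hLc] at ihh; simp at ihh
      | cons a t =>
        rw [hLc] at ihh
        simp only [List.head?_cons, Option.some.injEq] at ihh
        exact ⟨t, by rw [ihh]⟩
    rw [hLt] at ihl ihm ihp ihpw ⊢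
    refine ⟨rfl, ?_, ?_, ?_, ?_⟩
    · rw [List.getLast?_cons_cons]; exact ihl
    · intro w
      simp only [List.mem_cons]
      constructor
      · rintro (rfl | hw)
        · exact ⟨anc_refl _, hanc⟩
        · obtain ⟨h1, h2⟩ := (ihm w).1 (List.mem_cons.2 hw)
          exact ⟨anc_trans (anc_step hp) h1, h2⟩
      · rintro ⟨h1, h2⟩
        by_cases hwi : w = i
        · exact Or.inl hwi
        · obtain ⟨q, hq, hwq⟩ := anc_first_step h1 hwi
          have : q = p := Option.some.inj (hq.symm.trans hp)
          subst this
          exact Or.inr (List.mem_cons.1 ((ihm w).2 ⟨hwq, h2⟩))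
    · intro u v
      rw [mem_pairs_cons]
      constructor
      · rintro (⟨rfl, rfl⟩ | hm)
        · exact ⟨hp, anc_refl _, hanc, hij⟩
        · obtain ⟨h1, h2, h3, h4⟩ := (ihp u v).1 hm
          exact ⟨h1, anc_trans (anc_step hp) h2, h3, h4⟩
      · rintro ⟨h1, h2, h3, h4⟩
        by_cases hui : u = i
        · subst hui
          exact Or.inl ⟨rfl, Option.some.inj (h1.symm.trans hp)⟩
        · obtain ⟨q, hq, huq⟩ := anc_first_step h2 hui
          have : q = p := Option.some.inj (hq.symm.trans hp)
          subst this
          exact Or.inr ((ihp u v).2 ⟨h1, huq, h3, h4⟩)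
    · rw [List.pairwise_cons]
      refine ⟨?_, ihpw⟩
      intro w hw
      have := ((ihm w).1 hw).1
      exact lt_of_le_of_lt (F.dfs_le_of_anc this) hplt

/-- the chain from `i` up to the ancestor `j` -/
def chainUp (j i : V) : List V := upTo F.parent j (F.dfs i) i

lemma chainUp_spec {j i : V} (hanc : Anc F.parent j i) :
    (F.chainUp j i).head? = some i ∧
    (F.chainUp j i).getLast? = some j ∧
    (∀ w, w ∈ F.chainUp j i ↔ (Anc F.parent w i ∧ Anc F.parent j w)) ∧
    (∀ u v, (u, v) ∈ pairs (F.chainUp j i) ↔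
      (F.parent u = some v ∧ Anc F.parent u i ∧ Anc F.parent j u ∧ u ≠ j)) ∧
    (F.chainUp j i).Nodup := by
  obtain ⟨h1, h2, h3, h4, h5⟩ := F.upTo_spec (F.dfs i) hanc (by omega)
  exact ⟨h1, h2, h3, h4, h5.imp (fun h => fun e => by rw [e] at h; exact lt_irrefl _ h)⟩

end DFSForest

namespace Cyc

variable (C : Cyc V)

lemma verts_ne_nil : C.verts ≠ [] := by
  intro h
  have := C.two_le
  rw [h] at this
  simp at this

lemma mem_arcs_iff {e : V × V} :
    e ∈ C.arcs ↔ e ∈ pairs C.verts ∨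
      e = (C.verts.getLast C.verts_ne_nil, C.verts.head C.verts_ne_nil) := by
  rw [Cyc.arcs, List.mem_toFinset, zip_rotate_eq C.verts C.verts_ne_nil]
  simp

lemma getLast_ne_head {l : List V} (hnd : l.Nodup) (h2 : 2 ≤ l.length) (hne : l ≠ []) :
    l.getLast hne ≠ l.head hne := by
  cases l with
  | nil => simp at h2
  | cons x t =>
    have ht : t ≠ [] := by
      intro h; rw [h] at h2; simp at h2
    rw [List.getLast_cons ht, List.head_cons]
    intro h
    exact (List.nodup_cons.1 hnd).1 (h ▸ List.getLast_mem ht)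

lemma arc_ne {u v : V} (h : (u, v) ∈ C.arcs) : u ≠ v := by
  rcases C.mem_arcs_iff.1 h with h | h
  · exact pairs_ne_of_nodup C.nodup h
  · have hgh := getLast_ne_head C.nodup C.two_le C.verts_ne_nil
    simp only [Prod.ext_iff] at h
    intro huv
    exact hgh (by rw [← h.1, ← h.2, huv])

lemma arc_fst_mem {u v : V} (h : (u, v) ∈ C.arcs) : u ∈ C.verts := by
  rcases C.mem_arcs_iff.1 h with h | h
  · exact fst_mem_of_mem_pairs h
  · simp only [Prod.ext_iff] at h
    rw [h.1]
    exact List.getLast_mem _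

lemma arc_snd_mem {u v : V} (h : (u, v) ∈ C.arcs) : v ∈ C.verts := by
  rcases C.mem_arcs_iff.1 h with h | h
  · exact snd_mem_of_mem_pairs h
  · simp only [Prod.ext_iff] at h
    rw [h.2]
    exact List.head_mem _

lemma exists_out_arc {u : V} (hu : u ∈ C.verts) : ∃ v, (u, v) ∈ C.arcs := by
  obtain ⟨k, hk, hgu⟩ := List.mem_iff_getElem.1 hu
  have hk' : k < (C.verts.zip (C.verts.rotate 1)).length := by
    simpa [List.length_zip, List.length_rotate] using hk
  refine ⟨(C.verts.rotate 1)[k]'(by simpa [List.length_rotate] using hk), ?_⟩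
  rw [Cyc.arcs, List.mem_toFinset]
  have heq : (C.verts.zip (C.verts.rotate 1))[k]'hk'
      = (C.verts[k], (C.verts.rotate 1)[k]'(by simpa [List.length_rotate] using hk)) :=
    List.getElem_zip ..
  have hm := List.getElem_mem hk'
  rw [heq, hgu] at hm
  exact hm

end Cyc

lemma chain_arc_mem {E : Finset (V × V)} (F : DFSForest V E) (C : Cyc V) {y x' : V}
    (hr : Relation.ReflTransGen (fun u v => (u, v) ∈ C.arcs ∧ F.parent u = some v) y x') :
    ∀ w p, Anc F.parent w y → Anc F.parent x' w → w ≠ x' → F.parent w = some p →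
      (w, p) ∈ C.arcs := by
  induction hr using Relation.ReflTransGen.head_induction_on with
  | refl =>
    intro w p h1 h2 h3 _
    exact absurd (F.anc_antisymm h1 h2) h3
  | @head u m hstep htail ih =>
    intro w p h1 h2 h3 h4
    by_cases hwu : w = u
    · subst hwu
      have : p = m := Option.some.inj (h4.symm.trans hstep.2)
      subst this
      exact hstep.1
    · obtain ⟨q, hq, hwq⟩ := anc_first_step h1 hwu
      have : q = m := Option.some.inj (hq.symm.trans hstep.2)
      subst this
      exact ih w p hwq h2 h3 h4

namespace DFSForest

variable {E : Finset (V × V)}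

lemma treePathArcs_mem (F : DFSForest V E) {a i : V} {e : V × V} :
    e ∈ F.treePathArcs a i ↔
      (F.parent e.2 = some e.1 ∧ Anc F.parent a e.2 ∧ Anc F.parent e.2 i ∧ e.2 ≠ a) := by
  simp [treePathArcs]

lemma pairs_cons' {α : Type*} (a : α) (l : List α) (h : l ≠ []) :
    pairs (a :: l) = (a, l.head h) :: pairs l := by
  cases l with
  | nil => exact absurd rfl h
  | cons b t => rfl

lemma build_cycle (F : DFSForest V E) {i j a : V} (hij : i ≠ j)
    (hai : Anc F.parent a i) (haj : Anc F.parent a j)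
    (hE : (i, j) ∈ E)
    (hS : ∀ w p, Anc F.parent a w → Anc F.parent w j → w ≠ a → F.parent w = some p →
      (w, p) ∈ E)
    (hH : ∀ w, Anc F.parent a w → Anc F.parent w j → Anc F.parent w i → w = a)
    (hT1 : F.parent j ≠ some i) (hT2 : F.parent i ≠ some j) :
    ∃ C : Cyc V, (∀ e ∈ C.arcs, e ∈ E) ∧ C.Proper ∧
      (∀ e ∈ (pairs (F.chainUp a j)).toFinset, F.ShortBackwardArc e) ∧
      C.arcs = insert (i, j) ((pairs (F.chainUp a j)).toFinset ∪ F.treePathArcs a i) := by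
  obtain ⟨Ph, Pl, Pm, Pp, Pnd⟩ := F.chainUp_spec haj
  obtain ⟨Qh, Ql, Qm, Qp, Qnd⟩ := F.chainUp_spec hai
  set P := F.chainUp a j with hPdef
  set Q := F.chainUp a i with hQdef
  have hPne : P ≠ [] := by intro h; rw [h] at Ph; simp at Ph
  have hQne : Q ≠ [] := by intro h; rw [h] at Qh; simp at Qh
  have hQrne : Q.reverse ≠ [] := by simpa using hQne
  set R := Q.reverse.tail with hRdef
  have hQrev : Q.reverse = a :: R := by
    have h1 : Q.reverse.head? = some a := by rw [List.head?_reverse]; exact Ql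
    cases hc : Q.reverse with
    | nil => exact absurd hc hQrne
    | cons b t =>
      rw [hc] at h1
      simp only [List.head?_cons, Option.some.injEq] at h1
      rw [hRdef, hc, h1]
      simp
  have hRnd : R.Nodup := by
    have h := List.nodup_reverse.2 Qnd
    rw [hQrev] at h
    exact (List.nodup_cons.1 h).2
  have haR : a ∉ R := by
    have h := List.nodup_reverse.2 Qnd
    rw [hQrev] at h
    exact (List.nodup_cons.1 h).1
  have hRm : ∀ w, w ∈ R ↔ (Anc F.parent w i ∧ Anc F.parent a w ∧ w ≠ a) := by
    intro w
    constructor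
    · intro hw
      have hwQ : w ∈ Q := by
        rw [← List.mem_reverse, hQrev]
        exact List.mem_cons_of_mem _ hw
      have hwa : w ≠ a := fun h => haR (h ▸ hw)
      obtain ⟨h1, h2⟩ := (Qm w).1 hwQ
      exact ⟨h1, h2, hwa⟩
    · rintro ⟨h1, h2, h3⟩
      have hwQ : w ∈ Q := (Qm w).2 ⟨h1, h2⟩
      rw [← List.mem_reverse, hQrev] at hwQ
      rcases List.mem_cons.1 hwQ with h | h
      · exact absurd h h3
      · exact h
  have hdisj : P.Disjoint R := by
    intro w hwP hwR
    obtain ⟨h1, h2⟩ := (Pm w).1 hwP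
    obtain ⟨h3, h4, h5⟩ := (hRm w).1 hwR
    exact h5 (hH w h2 h1 h3)
  have hnd : (P ++ R).Nodup := Pnd.append hRnd hdisj
  have hRi : R = [] → i = a := by
    intro hR
    have hQa : Q = [a] := by
      have h := hQrev
      rw [hR] at h
      calc Q = Q.reverse.reverse := by simp
      _ = [a] := by rw [h]; simp
    rw [hQa] at Qh
    exact (by simpa using Qh : a = i).symm
  have hlen : 2 ≤ (P ++ R).length := by
    by_cases hR : R = []
    · have hia := hRi hR
      rw [hR, List.append_nil]
      rcases Nat.lt_or_ge P.length 2 with hl | hl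
      · exfalso
        have h1 : 0 < P.length := List.length_pos_iff.2 hPne
        have : P.length = 1 := by omega
        obtain ⟨x, hx⟩ := List.length_eq_one_iff.1 this
        rw [hx] at Ph Pl
        have hxj : x = j := by simpa using Ph
        have hxa : x = a := by simpa using Pl
        exact hij (by rw [hia, ← hxa, hxj])
      · exact hl
    · have h1 : 0 < P.length := List.length_pos_iff.2 hPne
      have h2 : 0 < R.length := List.length_pos_iff.2 hR
      rw [List.length_append]
      omega
  have hne : (P ++ R) ≠ [] := by
    intro h
    rw [h] at hlen
    simp at hlen
  have hhead? : (P ++ R).head? = some j := by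
    rw [List.head?_append_of_ne_nil _ hPne]
    exact Ph
  have hlast? : (P ++ R).getLast? = some i := by
    by_cases hR : R = []
    · rw [hR, List.append_nil, Pl, hRi hR]
    · have hRl : R.getLast? = some i := by
        have h1 : Q.reverse.getLast? = some i := by rw [List.getLast?_reverse]; exact Qh
        rw [hQrev, show (a :: R) = [a] ++ R by simp, List.getLast?_append] at h1
        rw [List.getLast?_eq_getLast hR] at h1 ⊢
        simpa using h1
      rw [List.getLast?_append, hRl]
      simp [Option.or]
  refine ⟨⟨P ++ R, hnd, hlen⟩, ?_⟩
  set C : Cyc V := ⟨P ++ R, hnd, hlen⟩ with hC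
  have hvne : C.verts ≠ [] := C.verts_ne_nil
  have hwrap : (C.verts.getLast C.verts_ne_nil, C.verts.head C.verts_ne_nil) = (i, j) := by
    have h1 : C.verts.getLast? = some (C.verts.getLast C.verts_ne_nil) :=
      List.getLast?_eq_getLast _
    have h2 : C.verts.head? = some (C.verts.head C.verts_ne_nil) :=
      List.head?_eq_head _
    have e1 : C.verts.getLast C.verts_ne_nil = i :=
      Option.some.inj (h1.symm.trans hlast?)
    have e2 : C.verts.head C.verts_ne_nil = j :=
      Option.some.inj (h2.symm.trans hhead?)
    rw [e1, e2]
  have harcs : ∀ e : V × V, e ∈ C.arcs ↔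
      (e = (i, j) ∨ e ∈ pairs P ∨ e ∈ pairs Q.reverse) := by
    intro e
    rw [C.mem_arcs_iff, hwrap]
    by_cases hR : R = []
    · have hQr1 : Q.reverse = [a] := by rw [hQrev, hR]
      have : C.verts = P := by show P ++ R = P; rw [hR, List.append_nil]
      rw [this, hQr1]
      simp only [pairs_singleton, List.not_mem_nil, or_false]
      tauto
    · have hPl2 : P.getLast hPne = a :=
        Option.some.inj ((List.getLast?_eq_getLast hPne).symm.trans Pl)
      have hverts : C.verts = P ++ R := rfl
      rw [hverts, pairs_append P R hPne hR, hPl2]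
      have hQrp : pairs Q.reverse = (a, R.head hR) :: pairs R := by
        rw [hQrev, pairs_cons' a R hR]
      rw [hQrp]
      simp only [List.mem_append, List.mem_cons]
      tauto
  have hTQchar : ∀ u v : V, (u, v) ∈ pairs Q.reverse ↔
      (F.parent v = some u ∧ Anc F.parent a v ∧ Anc F.parent v i ∧ v ≠ a) := by
    intro u v
    rw [mem_pairs_reverse, Qp v u]
    tauto
  have htree_eq : (pairs Q.reverse).toFinset = F.treePathArcs a i := by
    ext e
    obtain ⟨u, v⟩ := e
    rw [List.mem_toFinset, hTQchar, F.treePathArcs_mem]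
  refine ⟨?_, ?_, ?_, ?_⟩
  · -- arcs ⊆ E
    intro e he
    obtain ⟨u, v⟩ := e
    rcases (harcs (u, v)).1 he with h | h | h
    · obtain ⟨rfl, rfl⟩ : i = u ∧ j = v := by simpa [Prod.ext_iff] using h.symm
      exact hE
    · obtain ⟨h1, h2, h3, h4⟩ := (Pp u v).1 h
      exact hS u v h3 h2 h4 h1
    · obtain ⟨h1, h2, h3, h4⟩ := (hTQchar u v).1 h
      exact F.tree_arc_mem v u h1
  · -- proper
    intro e he
    obtain ⟨u, v⟩ := e
    intro hswap
    rcases (harcs (u, v)).1 he with h | h | h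
    · obtain ⟨rfl, rfl⟩ : i = u ∧ j = v := by simpa [Prod.ext_iff] using h.symm
      rcases (harcs (j, i)).1 hswap with h' | h' | h'
      · obtain ⟨h1, h2⟩ : j = i ∧ i = j := by simpa [Prod.ext_iff] using h'
        exact hij h2
      · exact hT1 ((Pp j i).1 h').1
      · exact hT2 ((hTQchar j i).1 h').1
    · obtain ⟨h1, h2, h3, h4⟩ := (Pp u v).1 h
      rcases (harcs (v, u)).1 hswap with h' | h' | h'
      · obtain ⟨rfl, rfl⟩ : i = v ∧ j = u := by simpa [Prod.ext_iff] using h'.symm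
        exact hT1 h1
      · obtain ⟨h1', _, _, _⟩ := (Pp v u).1 h'
        have d1 := F.dfs_parent_lt u v h1
        have d2 := F.dfs_parent_lt v u h1'
        omega
      · obtain ⟨h1', h2', h3', h4'⟩ := (hTQchar v u).1 h'
        exact h4 (hH u h3 h2 h3')
    · obtain ⟨h1, h2, h3, h4⟩ := (hTQchar u v).1 h
      rcases (harcs (v, u)).1 hswap with h' | h' | h'
      · obtain ⟨rfl, rfl⟩ : i = v ∧ j = u := by simpa [Prod.ext_iff] using h'.symm
        exact hT2 h1
      · obtain ⟨h1', h2', h3', h4'⟩ := (Pp v u).1 h'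
        exact h4' (hH v h3' h2' h3)
      · obtain ⟨h1', h2', h3', h4'⟩ := (hTQchar v u).1 h'
        have d1 := F.dfs_parent_lt v u h1
        have d2 := F.dfs_parent_lt u v h1'
        omega
  · -- short backward arcs
    intro e he
    obtain ⟨u, v⟩ := e
    rw [List.mem_toFinset] at he
    obtain ⟨h1, h2, h3, h4⟩ := (Pp u v).1 he
    exact ⟨hS u v h3 h2 h4 h1, h1⟩
  · -- arcs equation
    ext e
    rw [harcs e, Finset.mem_insert, Finset.mem_union, List.mem_toFinset, ← htree_eq,
      List.mem_toFinset]

end DFSForest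

/-- If a directed graph equipped with a DFS forest contains a proper directed cycle, then
it contains a proper backward cycle, a proper forward cycle, or a proper cross cycle. -/
theorem proper_cycle_classification (E : Finset (V × V)) (F : DFSForest V E)
    (h : ∃ C : Cyc V, (∀ a ∈ C.arcs, a ∈ E) ∧ C.Proper) :
    (∃ C : Cyc V, (∀ a ∈ C.arcs, a ∈ E) ∧ F.ProperBackwardCycle C) ∨
    (∃ C : Cyc V, (∀ a ∈ C.arcs, a ∈ E) ∧ F.ProperForwardCycle C) ∨
    (∃ C : Cyc V, (∀ a ∈ C.arcs, a ∈ E) ∧ F.ProperCrossCycle C) := by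
  obtain ⟨C, hCE, hCp⟩ := h
  classical
  set nxt : V → V := fun u => if h : ∃ v, (u, v) ∈ C.arcs then h.choose else u with hnxtdef
  have hnxt_arc : ∀ u ∈ C.verts, (u, nxt u) ∈ C.arcs := by
    intro u hu
    have hex : ∃ v, (u, v) ∈ C.arcs := C.exists_out_arc hu
    rw [hnxtdef]
    simp only [dif_pos hex]
    exact hex.choose_spec
  set T : Finset V := C.verts.toFinset.filter (fun u => ¬ F.parent u = some (nxt u))
    with hTdef
  have hTmem : ∀ u, u ∈ T ↔ (u ∈ C.verts ∧ F.parent u ≠ some (nxt u)) := by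
    intro u
    rw [hTdef]
    simp [List.mem_toFinset]
  set stepD : V → V → Prop := fun u v => (u, v) ∈ C.arcs ∧ F.parent u = some v
    with hstepDdef
  have hchainEnd : ∀ (n : ℕ) (y : V), F.dfs y < n → y ∈ C.verts →
      ∃ x', x' ∈ T ∧ Relation.ReflTransGen stepD y x' := by
    intro n
    induction n with
    | zero => intro y hy _; omega
    | succ n ih =>
      intro y hy hyV
      by_cases hp : F.parent y = some (nxt y)
      · have harc := hnxt_arc y hyV
        have hmem : nxt y ∈ C.verts := C.arc_snd_mem harc
        have hlt : F.dfs (nxt y) < n := by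
          have := F.dfs_parent_lt y (nxt y) hp
          omega
        obtain ⟨x', hx', hr⟩ := ih (nxt y) hlt hmem
        exact ⟨x', hx', Relation.ReflTransGen.head ⟨harc, hp⟩ hr⟩
      · exact ⟨y, (hTmem y).2 ⟨hyV, hp⟩, Relation.ReflTransGen.refl⟩
  have hTne : T.Nonempty := by
    have hvne : C.verts.toFinset.Nonempty :=
      ⟨C.verts.head C.verts_ne_nil, List.mem_toFinset.2 (List.head_mem C.verts_ne_nil)⟩
    obtain ⟨y, hy, hminy⟩ := Finset.exists_min_image C.verts.toFinset F.dfs hvne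
    refine ⟨y, (hTmem y).2 ⟨List.mem_toFinset.1 hy, ?_⟩⟩
    intro hp
    have harc := hnxt_arc y (List.mem_toFinset.1 hy)
    have h2 : nxt y ∈ C.verts.toFinset := List.mem_toFinset.2 (C.arc_snd_mem harc)
    have h3 := hminy _ h2
    have h4 := F.dfs_parent_lt y (nxt y) hp
    omega
  obtain ⟨u0, hu0T, hu0min⟩ := Finset.exists_min_image T F.psi hTne
  set T' := T.filter (fun u => F.psi u = F.psi u0) with hT'def
  have hT'ne : T'.Nonempty := ⟨u0, by rw [hT'def]; exact Finset.mem_filter.2 ⟨hu0T, rfl⟩⟩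
  obtain ⟨x, hxT', hxmax⟩ := Finset.exists_max_image T' F.dfs hT'ne
  have hxT : x ∈ T := by
    rw [hT'def] at hxT'
    exact (Finset.mem_filter.1 hxT').1
  have hxpsi : F.psi x = F.psi u0 := by
    rw [hT'def] at hxT'
    exact (Finset.mem_filter.1 hxT').2
  have hxV : x ∈ C.verts := ((hTmem x).1 hxT).1
  have hxnd : F.parent x ≠ some (nxt x) := ((hTmem x).1 hxT).2
  set y := nxt x with hydef
  have harc : (x, y) ∈ C.arcs := hnxt_arc x hxV
  have hyE : (x, y) ∈ E := hCE _ harc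
  have hne : x ≠ y := C.arc_ne harc
  have hyV : y ∈ C.verts := C.arc_snd_mem harc
  have hkey : ∀ x' ∈ T, F.psi x' = F.psi x → F.dfs x' ≤ F.dfs x := by
    intro x' hx' hpsi
    refine hxmax x' ?_
    rw [hT'def]
    exact Finset.mem_filter.2 ⟨hx', by rw [hpsi, hxpsi]⟩
  have hminx : ∀ x' ∈ T, F.psi x ≤ F.psi x' := by
    intro x' hx'
    rw [hxpsi]
    exact hu0min x' hx'
  -- the backward case, used twice
  have hbackward : Anc F.parent y x →
      (∃ C : Cyc V, (∀ a ∈ C.arcs, a ∈ E) ∧ F.ProperBackwardCycle C) := by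
    intro hanc
    have hT1 : F.parent y ≠ some x := by
      intro hp
      exact hne (F.anc_antisymm (anc_step hp) hanc)
    obtain ⟨C', hC'E, hC'p, hC'short, hC'arcs⟩ :=
      F.build_cycle (i := x) (j := y) (a := y) hne hanc (anc_refl y) hyE
        (fun w p h1 h2 h3 _ => absurd (F.anc_antisymm h2 h1) h3)
        (fun w h1 h2 _ => F.anc_antisymm h2 h1) hT1 hxnd
    have hchain : F.chainUp y y = [y] := upTo_self _ _ _
    rw [hchain] at hC'arcs
    refine ⟨C', hC'E, hC'p, x, y, ⟨⟨hyE, hanc, hne.symm⟩, hxnd⟩, ?_⟩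
    rw [hC'arcs]
    simp
  rcases F.arcs_comparable_or_lt (x, y) hyE with h | h | h
  · -- forward arc case : x is an ancestor of y
    obtain ⟨x', hx'T, hr⟩ := hchainEnd (F.dfs y + 1) y (by omega) hyV
    have hx'y : Anc F.parent x' y :=
      Relation.ReflTransGen.mono (fun u v (hv : stepD u v) => hv.2) _ _ hr
    have hx'x : Anc F.parent x' x := by
      rcases anc_total hx'y h with hh | hh
      · exact hh
      · by_cases hex : x' = x
        · rw [hex]; exact anc_refl x
        · exfalso
          have h1 : F.psi x' ≤ F.psi x := F.psi_le_of_anc hh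
          have h2 : F.psi x ≤ F.psi x' := hminx x' hx'T
          have h3 : F.dfs x' ≤ F.dfs x := hkey x' hx'T (le_antisymm h1 h2)
          have h4 : F.dfs x < F.dfs x' := F.dfs_lt_of_anc hh (fun e => hex e.symm)
          omega
    have hT1 : F.parent y ≠ some x := by
      intro hp
      have hyx' : y ≠ x' := by
        intro hyx
        rw [← hyx] at hx'x
        exact hne (F.anc_antisymm h hx'x)
      have hmem := chain_arc_mem F C hr y x (anc_refl y) hx'y hyx' hp
      exact hCp _ harc hmem
    right; left
    obtain ⟨C', hC'E, hC'p, hC'short, hC'arcs⟩ :=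
      F.build_cycle (i := x) (j := y) (a := x) hne (anc_refl x) h hyE
        (by
          intro w p h1 h2 h3 h4
          refine hCE _ (chain_arc_mem F C hr w p h2 (anc_trans h1 hx'x) ?_ h4)
          intro hw
          exact h3 (hw.trans (F.anc_antisymm (hw ▸ h1) hx'x).symm))
        (fun w h1 _ h3 => F.anc_antisymm h3 h1) hT1 hxnd
    have htpe : F.treePathArcs x x = ∅ := by
      ext e
      simp only [F.treePathArcs_mem, Finset.notMem_empty, iff_false, not_and]
      intro h1 h2 h3
      exact fun h4 => h4 (F.anc_antisymm h3 h2)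
    rw [htpe, Finset.union_empty] at hC'arcs
    exact ⟨C', hC'E, hC'p, x, y, (pairs (F.chainUp x y)).toFinset,
      ⟨hyE, fun ht => hT1 ht.2, h, hne⟩, hC'short, hC'arcs⟩
  · exact Or.inl (hbackward h)
  · have hlt : F.dfs y < F.dfs x := h
    by_cases hanc : Anc F.parent y x
    · exact Or.inl (hbackward hanc)
    · -- cross arc case
      have hnxy : ¬ Anc F.parent x y := by
        intro hh
        have := F.dfs_le_of_anc hh
        omega
      obtain ⟨x', hx'T, hr⟩ := hchainEnd (F.dfs y + 1) y (by omega) hyV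
      have hx'y : Anc F.parent x' y :=
        Relation.ReflTransGen.mono (fun u v (hv : stepD u v) => hv.2) _ _ hr
      have hx'x : Anc F.parent x' x := by
        by_contra hcon
        have hncon2 : ¬ Anc F.parent x x' := fun hh => hnxy (anc_trans hx'y hh)
        have hd1 : F.dfs x' ≤ F.dfs y := F.dfs_le_of_anc hx'y
        have hpsile : F.psi x' ≤ F.dfs x :=
          F.psi_le_dfs_of_incomp hncon2 hcon (by omega)
        have h5 := hminx x' hx'T
        have h6 := F.dfs_lt_psi x
        omega
      set CA := Finset.univ.filter (fun b => Anc F.parent b x ∧ Anc F.parent b y)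
        with hCAdef
      have hCAmem : ∀ b, b ∈ CA ↔ (Anc F.parent b x ∧ Anc F.parent b y) := by
        intro b
        rw [hCAdef]
        simp
      have hCAne : CA.Nonempty := ⟨x', (hCAmem x').2 ⟨hx'x, hx'y⟩⟩
      obtain ⟨a, haCA, hamax⟩ := Finset.exists_max_image CA F.dfs hCAne
      obtain ⟨hax, hay⟩ := (hCAmem a).1 haCA
      have hlca : ∀ b, Anc F.parent b x → Anc F.parent b y → Anc F.parent b a := by
        intro b hbx hby
        rcases anc_total hbx hax with hh | hh
        · exact hh
        · have h1 := F.dfs_le_of_anc hh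
          have h2 := hamax b ((hCAmem b).2 ⟨hbx, hby⟩)
          have hab : a = b := F.dfs_inj (le_antisymm h1 h2)
          rw [hab]
          exact anc_refl b
      have hx'a : Anc F.parent x' a := hlca x' hx'x hx'y
      have hT1 : F.parent y ≠ some x := fun hp => hnxy (anc_step hp)
      have hT2 : F.parent x ≠ some y := fun hp => hanc (anc_step hp)
      right; right
      obtain ⟨C', hC'E, hC'p, hC'short, hC'arcs⟩ :=
        F.build_cycle (i := x) (j := y) (a := a) hne hax hay hyE
          (by
            intro w p h1 h2 h3 h4
            refine hCE _ (chain_arc_mem F C hr w p h2 (anc_trans h1 hx'a) ?_ h4)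
            intro hw
            exact h3 (hw.trans (F.anc_antisymm (hw ▸ h1) hx'a).symm))
          (fun w h1 h2 h3 => F.anc_antisymm (hlca w h3 h2) h1) hT1 hT2
      exact ⟨C', hC'E, hC'p, x, y, a, (pairs (F.chainUp a y)).toFinset,
        ⟨hyE, hnxy, hanc⟩, ⟨hax, hay, hlca⟩, hC'short, hC'arcs⟩
end
end

section
/- Let f be an optimal integer flow with an optimal node potential y such that the residual reduced costs satisfy c̄(f) ≥ 0 on D_f, and let (i,j) be an arc of D_f whose reverse (j,i) is not in A_f. Then the minimum of c(f,C) over all proper directed cycles C in D_f containing (i,j) equals c̄_{ij}(f) + d̄_{ji}, where d̄_{ji} is the shortest-path distance from j to i in D_f with respect to the residual reduced costs c̄(f). -/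
open scoped Classical
noncomputable section

variable {V : Type} [Fintype V] [DecidableEq V]

namespace Network

/-- `p` is a (simple) directed path from `j` to `i` in the residual graph `D_f`. -/
def IsResPath (N : Network V) (f : V × V → ℤ) (j i : V) (p : List V) : Prop :=
  p.Nodup ∧ p.head? = some j ∧ p.getLast? = some i ∧
    p.Chain' fun u v => (u, v) ∈ N.resArcs f

/-- The total residual reduced cost of a path (a list of vertices). -/
def pathRedCost (N : Network V) (y : V → ℝ) (p : List V) : ℝ :=
  ((p.zip p.tail).map fun a => N.resRedCost y a).sum

end Network

namespace CycAux

variable {α : Type*}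

lemma mod_succ (a n : ℕ) : (a % n + 1) % n = (a + 1) % n := by
  conv_rhs => rw [← Nat.mod_add_div a n, Nat.add_right_comm, Nat.add_mul_mod_self_left]

lemma zip_snoc : ∀ (t : List α) (a b : α),
    (a :: t).zip (t ++ [b]) = (a :: t).zip t ++ [((a :: t).getLast (by simp), b)]
  | [], a, b => by simp
  | c :: t', a, b => by
    have := zip_snoc t' c b
    simp only [List.cons_append, List.zip_cons_cons] at this ⊢
    rw [this]
    simp [List.getLast_cons]

lemma zip_rotate_one (l : List α) (h : l ≠ []) :
    l.zip (l.rotate 1) = l.zip l.tail ++ [(l.getLast h, l.head h)] := by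
  obtain ⟨a, t, rfl⟩ := List.exists_cons_of_ne_nil h
  rw [show (a :: t).rotate 1 = t ++ [a] by simp [List.rotate_cons_succ]]
  simpa using zip_snoc t a a

lemma sum_map_tel (y : α → ℝ) : ∀ (p : List α) (h : p ≠ []),
    ((p.zip p.tail).map fun a => y a.1 - y a.2).sum = y (p.head h) - y (p.getLast h)
  | [a], _ => by simp
  | a :: b :: t, _ => by
    have := sum_map_tel y (b :: t) (by simp)
    simp only [List.tail_cons, List.zip_cons_cons, List.map_cons, List.sum_cons] at this ⊢
    rw [this, show (a :: b :: t).getLast (by simp) = (b :: t).getLast (by simp) from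
      List.getLast_cons (by simp)]
    simp

lemma mem_zip_rotate {l : List α} {a : α × α} :
    a ∈ l.zip (l.rotate 1) ↔ ∃ k, ∃ hk : k < l.length,
      a = (l[k], l[(k + 1) % l.length]'(Nat.mod_lt _ (by omega))) := by
  have hlen : (l.zip (l.rotate 1)).length = l.length := by simp
  constructor
  · intro ha
    obtain ⟨k, hk, rfl⟩ := List.mem_iff_getElem.mp ha
    refine ⟨k, by omega, ?_⟩
    rw [List.getElem_zip, List.getElem_rotate]
  · rintro ⟨k, hk, rfl⟩
    have : (l.zip (l.rotate 1))[k]'(by omega) =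
        (l[k], l[(k + 1) % l.length]'(Nat.mod_lt _ (by omega))) := by
      rw [List.getElem_zip, List.getElem_rotate]
    exact this ▸ List.getElem_mem _

lemma zip_rotate_rotate (l : List α) (m : ℕ) :
    (l.rotate m).zip ((l.rotate m).rotate 1) = (l.zip (l.rotate 1)).rotate m := by
  rcases eq_or_ne l [] with rfl | h
  · simp
  have hn : 0 < l.length := List.length_pos_iff.mpr h
  apply List.ext_getElem
  · simp
  · intro k h1 h2
    have hk : k < l.length := by simpa using h1
    have hkz : k < (l.zip (l.rotate 1)).length := by simpa using hk
    have RHS : ((l.zip (l.rotate 1)).rotate m)[k] =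
        (l.zip (l.rotate 1))[(k + m) % (l.zip (l.rotate 1)).length]'
          (Nat.mod_lt _ (by omega)) := List.getElem_rotate _ _ _ _
    rw [RHS, List.getElem_zip, List.getElem_rotate, List.getElem_zip, List.getElem_rotate,
      List.getElem_rotate, List.getElem_rotate]
    have hlen : (l.zip (l.rotate 1)).length = l.length := by simp
    congr 2
    · simp [hlen]
    · simp only [List.length_rotate, hlen]
      rw [Nat.mod_add_mod]
      ring_nf
      rw [Nat.add_mod_mod, Nat.add_assoc]

lemma chain'_of_mem_zip {R : α → α → Prop} {p : List α} (h : p.Chain' R)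
    {a : α × α} (ha : a ∈ p.zip p.tail) : R a.1 a.2 := by
  obtain ⟨k, hk, rfl⟩ := List.mem_iff_getElem.mp ha
  rw [List.getElem_zip]
  have hk' : k < p.length - 1 := by
    rcases p with _ | ⟨x, t⟩
    · simp at hk
    · simpa using hk
  have := List.isChain_iff_getElem.mp h k (by omega)
  simpa [List.get_eq_getElem, List.getElem_tail] using this

lemma sum_map_add (f g : α → ℝ) (l : List α) :
    (l.map fun a => f a + g a).sum = (l.map f).sum + (l.map g).sum := by
  induction l with
  | nil => simp
  | cons a t ih => simp [ih]; ring

lemma sum_map_cycle_tel (y : α → ℝ) (l : List α) :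
    ((l.zip (l.rotate 1)).map fun a => y a.1 - y a.2).sum = 0 := by
  rcases eq_or_ne l [] with rfl | h
  · simp
  · rw [zip_rotate_one l h, List.map_append, List.sum_append, sum_map_tel y l h]
    simp

lemma nodup_zip_rotate {l : List α} (hl : l.Nodup) : (l.zip (l.rotate 1)).Nodup := by
  apply List.Nodup.of_map Prod.fst
  rwa [List.map_fst_zip (by simp)]

end CycAux

open CycAux

namespace Network

variable (N : Network V) (y : V → ℝ)

lemma resRedCost_eq : N.resRedCost y = fun a => N.resCost a + (y a.1 - y a.2) := by
  funext a; unfold Network.resRedCost; ring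

/-- Splitting a sum of residual reduced costs into costs plus telescoping part. -/
lemma sum_resRedCost_split (L : List (V × V)) :
    (L.map (N.resRedCost y)).sum
      = (L.map N.resCost).sum + (L.map fun a => y a.1 - y a.2).sum := by
  rw [resRedCost_eq]; exact sum_map_add _ _ L

lemma sum_resRedCost_cycle (l : List V) :
    ((l.zip (l.rotate 1)).map (N.resRedCost y)).sum
      = ((l.zip (l.rotate 1)).map N.resCost).sum := by
  rw [sum_resRedCost_split, sum_map_cycle_tel]; ring

lemma pathRedCost_eq_split (p : List V) (h : p ≠ []) :
    N.pathRedCost y p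
      = ((p.zip p.tail).map N.resCost).sum + (y (p.head h) - y (p.getLast h)) := by
  unfold Network.pathRedCost
  rw [sum_resRedCost_split, sum_map_tel]

lemma cycCost_eq_list_sum (C : Cyc V) :
    N.cycCost C = ((C.verts.zip (C.verts.rotate 1)).map N.resCost).sum := by
  unfold Network.cycCost Cyc.arcs
  exact List.sum_toFinset _ (nodup_zip_rotate C.nodup)

end Network

/-- Let `f` be an optimal flow with an optimal node potential `y` and let `(i,j)` be a
residual arc whose reverse is not a residual arc. Then the minimum of `c(f,C)` over all
proper directed cycles `C` of `D_f` containing `(i,j)` equals `c̄_{ij}(f) + d̄_{ji}`,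
where `d̄_{ji}` is the shortest-path distance from `j` to `i` in `D_f` with respect to the
residual reduced costs. -/
theorem min_proper_cycle_through_arc (N : Network V) (hN : N.Wellformed)
    (f : V × V → ℤ) (hf : N.Optimal f) (y : V → ℝ) (hy : N.OptPotential f y)
    (e : V × V) (he : e ∈ N.resArcs f) (hrev : (e.2, e.1) ∉ N.resArcs f)
    (d : ℝ)
    (hd : IsLeast {x : ℝ | ∃ p : List V, N.IsResPath f e.2 e.1 p ∧ x = N.pathRedCost y p} d) :
    IsLeast {x : ℝ | ∃ C : Cyc V,
        N.IsResCycle f C ∧ C.Proper ∧ e ∈ C.arcs ∧ x = N.cycCost C}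
      (N.resRedCost y e + d) := by
    classical
  have hij : e.1 ≠ e.2 := by
    intro h
    apply hrev
    have : (e.2, e.1) = e := by
      have := Prod.mk.eta (p := e)
      rw [← this, Prod.mk.injEq]
      exact ⟨h.symm, h⟩
    rwa [this]
  constructor
  · -- membership: build a cycle from a shortest path
    obtain ⟨p, ⟨hpnd, hph, hpl, hpc⟩, hdp⟩ := hd.1
    have hpne : p ≠ [] := by rintro rfl; simp at hph
    have hhead : p.head hpne = e.2 := by
      rw [List.head?_eq_head hpne] at hph; exact Option.some.inj hph
    have hlast : p.getLast hpne = e.1 := by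
      rw [List.getLast?_eq_getLast hpne] at hpl; exact Option.some.inj hpl
    have h3 : 3 ≤ p.length := by
      rcases p with _ | ⟨a, _ | ⟨b, _ | ⟨c, t⟩⟩⟩
      · exact absurd rfl hpne
      · exact absurd (hlast.symm.trans hhead) hij
      · exfalso
        apply hrev
        have hab : (a, b) ∈ N.resArcs f := by
          simpa using (List.isChain_cons_cons.mp hpc).1
        have ha : a = e.2 := hhead
        have hb : b = e.1 := hlast
        rwa [ha, hb] at hab
      · simp only [List.length_cons]; omega
    set C : Cyc V := ⟨p, hpnd, by omega⟩ with hC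
    have hvc : C.verts = p := rfl
    set L : List (V × V) := p.zip (p.rotate 1) with hLdef
    have hLr : L = p.zip p.tail ++ [(e.1, e.2)] := by
      rw [hLdef, zip_rotate_one p hpne, hlast, hhead]
    have harcs : C.arcs = L.toFinset := rfl
    have hmemL : ∀ a : V × V, a ∈ C.arcs ↔ a ∈ L := by
      intro a; rw [harcs]; exact List.mem_toFinset
    have heL : e ∈ C.arcs := by
      rw [hmemL, hLr]
      simp
    refine ⟨C, ?_, ?_, heL, ?_⟩
    · -- residual cycle
      intro a ha
      rw [hmemL, hLr, List.mem_append] at ha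
      rcases ha with ha | ha
      · have := chain'_of_mem_zip hpc ha
        simpa using this
      · simp only [List.mem_singleton] at ha
        subst ha
        simpa using he
    · -- proper
      intro a ha hb
      rw [hmemL] at ha hb
      rw [hLdef, mem_zip_rotate] at ha hb
      obtain ⟨k, hk, hak⟩ := ha
      obtain ⟨m, hm, hbm⟩ := hb
      have ha1 : a.1 = p[k] := congrArg Prod.fst hak
      have ha2 : a.2 = p[(k + 1) % p.length]'(Nat.mod_lt _ (by omega)) :=
        congrArg Prod.snd hak
      have hb1 : a.2 = p[m] := congrArg Prod.fst hbm
      have hb2 : a.1 = p[(m + 1) % p.length]'(Nat.mod_lt _ (by omega)) :=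
        congrArg Prod.snd hbm
      have e1 : k = (m + 1) % p.length :=
        (List.Nodup.getElem_inj_iff hpnd).mp (ha1.symm.trans hb2)
      have e2 : (k + 1) % p.length = m :=
        (List.Nodup.getElem_inj_iff hpnd).mp (ha2.symm.trans hb1)
      rw [← e2] at e1
      rw [mod_succ] at e1
      rcases Nat.lt_or_ge (k + 1 + 1) p.length with hlt | hge
      · rw [Nat.mod_eq_of_lt hlt] at e1; omega
      · rw [Nat.mod_eq_sub_mod hge, Nat.mod_eq_of_lt (by omega)] at e1
        omega
    · -- cost
      have hcyc : N.cycCost C = (L.map N.resCost).sum := N.cycCost_eq_list_sum C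
      have hsum : (L.map N.resCost).sum
          = ((p.zip p.tail).map N.resCost).sum + N.resCost (e.1, e.2) := by
        rw [hLr]; simp
      have hpath : N.pathRedCost y p
          = ((p.zip p.tail).map N.resCost).sum + (y e.2 - y e.1) := by
        rw [N.pathRedCost_eq_split y p hpne, hhead, hlast]
      have hred : N.resRedCost y e = N.resCost e + (y e.1 - y e.2) := by
        unfold Network.resRedCost; ring
      have hee : N.resCost (e.1, e.2) = N.resCost e := by
        rw [Prod.mk.eta]
      rw [hcyc, hsum, hdp, hpath, hred, hee]
      ring
  · -- lower bound
    rintro x ⟨C, hCres, hCprop, heC, rfl⟩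
    set l : List V := C.verts with hl
    have hln : 2 ≤ l.length := C.two_le
    have hlnd : l.Nodup := C.nodup
    have hlne : l ≠ [] := by
      intro h; rw [h] at hln; simp at hln
    set L : List (V × V) := l.zip (l.rotate 1) with hLdef
    have hmemL : ∀ a : V × V, a ∈ C.arcs ↔ a ∈ L := by
      intro a; exact List.mem_toFinset
    have heL : e ∈ L := (hmemL e).mp heC
    rw [hLdef, mem_zip_rotate] at heL
    obtain ⟨k, hk, hek⟩ := heL
    have he1 : e.1 = l[k] := congrArg Prod.fst hek
    have he2 : e.2 = l[(k + 1) % l.length]'(Nat.mod_lt _ (by omega)) :=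
      congrArg Prod.snd hek
    set q : List V := l.rotate (k + 1) with hq
    have hqlen : q.length = l.length := by rw [hq, List.length_rotate]
    have hqne : q ≠ [] := by
      intro h
      rw [h] at hqlen; rw [← hqlen] at hln; simp at hln
    have hqnd : q.Nodup := ((l.rotate_perm (k + 1)).nodup_iff).mpr hlnd
    have hqget : ∀ (m : ℕ) (hm : m < q.length),
        q[m] = l[(m + (k + 1)) % l.length]'(Nat.mod_lt _ (by omega)) := by
      intro m hm
      exact List.getElem_rotate l (k + 1) m (by simp only [List.length_rotate]; omega)
    have hqhead : q.head hqne = e.2 := by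
      rw [List.head_eq_getElem hqne, hqget 0 (by omega), he2]
      congr 1
      simp
    have hqlast : q.getLast hqne = e.1 := by
      rw [List.getLast_eq_getElem hqne, hqget (q.length - 1) (by omega), he1]
      congr 1
      rw [hqlen]
      have h5 : l.length - 1 + (k + 1) = k + l.length := by omega
      rw [h5, Nat.add_mod_right, Nat.mod_eq_of_lt hk]
    set Lq : List (V × V) := q.zip (q.rotate 1) with hLq
    have hLqrot : Lq = L.rotate (k + 1) := zip_rotate_rotate l (k + 1)
    have hmemLq : ∀ a : V × V, a ∈ Lq ↔ a ∈ L := by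
      intro a; rw [hLqrot]; exact List.mem_rotate
    have hpath : N.IsResPath f e.2 e.1 q := by
      refine ⟨hqnd, ?_, ?_, ?_⟩
      · rw [List.head?_eq_head hqne, hqhead]
      · rw [List.getLast?_eq_getLast hqne, hqlast]
      · apply List.isChain_iff_getElem.mpr
        intro m hm
        have hm1 : m + 1 < q.length := by omega
        have harc : (q.get ⟨m, by omega⟩, q.get ⟨m + 1, by omega⟩) ∈ Lq := by
          rw [hLq, mem_zip_rotate]
          have hmq : m < q.length := by omega
          refine ⟨m, hmq, ?_⟩
          have hmod : (m + 1) % q.length = m + 1 := Nat.mod_eq_of_lt hm1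
          simp only [List.get_eq_getElem, Prod.mk.injEq]
          refine ⟨trivial, ?_⟩
          congr 1
          exact hmod.symm
        exact hCres _ ((hmemL _).mpr ((hmemLq _).mp harc))
    have hdle : d ≤ N.pathRedCost y q := hd.2 ⟨q, hpath, rfl⟩
    have hcyc : N.cycCost C = (L.map (N.resRedCost y)).sum := by
      rw [N.cycCost_eq_list_sum C, ← N.sum_resRedCost_cycle y l]
    have hqperm : List.Perm Lq L := by rw [hLqrot]; exact List.rotate_perm L (k + 1)
    have hperm : (L.map (N.resRedCost y)).sum = (Lq.map (N.resRedCost y)).sum :=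
      (List.Perm.sum_eq (hqperm.map (N.resRedCost y))).symm
    have hLqr : Lq = q.zip q.tail ++ [(e.1, e.2)] := by
      rw [hLq, zip_rotate_one q hqne, hqlast, hqhead]
    have hsum : (Lq.map (N.resRedCost y)).sum
        = N.pathRedCost y q + N.resRedCost y (e.1, e.2) := by
      rw [hLqr]
      simp [Network.pathRedCost]
    have hee : N.resRedCost y (e.1, e.2) = N.resRedCost y e := by rw [Prod.mk.eta]
    rw [hcyc, hperm, hsum, hee]
    linarith
end
end
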